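/- Every finite nonempty connected contractible configuration in the grid that has neither leaves nor 4-cycles containing a NE-corner or NW-corner consists of a single cell. -/

import Mathlib

/-- Two grid cells are adjacent if their L1 (Manhattan) distance is 1. -/
def gridAdj (p q : ℤ × ℤ) : Prop :=
  |p.1 - q.1| + |p.2 - q.2| = 1

/-- Reachability within a set `S` of cells, along grid adjacency. -/
inductive ReachIn (S : Set (ℤ × ℤ)) : ℤ × ℤ → ℤ × ℤ → Prop
  | refl {p : ℤ × ℤ} (hp : p ∈ S) : ReachIn S p p
  | tail {p q r : ℤ × ℤ} (h : ReachIn S p q) (hadj : gridAdj q r) (hr : r ∈ S) :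
      ReachIn S p r

/-- A set of cells is connected (as induced subgraph of the grid). -/
def ConnectedConf (C : Set (ℤ × ℤ)) : Prop :=
  C.Nonempty ∧ ∀ p ∈ C, ∀ q ∈ C, ReachIn C p q

/-- A configuration is contractible if the subgraph of the grid induced by its
complement is connected. -/
def Contractible (C : Set (ℤ × ℤ)) : Prop :=
  ∀ p ∈ Cᶜ, ∀ q ∈ Cᶜ, ReachIn Cᶜ p q

/-- A leaf: a cell of `C` with exactly one neighbor in `C`. -/
def IsLeaf (C : Set (ℤ × ℤ)) (v : ℤ × ℤ) : Prop :=
  v ∈ C ∧ ∃! w, w ∈ C ∧ gridAdj v w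

/-- A NE-corner: a cell of `C` whose neighbors in `C` are exactly the cells
South and West of it. -/
def IsNECorner (C : Set (ℤ × ℤ)) (v : ℤ × ℤ) : Prop :=
  v ∈ C ∧ (v.1 - 1, v.2) ∈ C ∧ (v.1, v.2 - 1) ∈ C ∧
    (v.1 + 1, v.2) ∉ C ∧ (v.1, v.2 + 1) ∉ C

/-- A NW-corner: a cell of `C` whose neighbors in `C` are exactly the cells
South and East of it. -/
def IsNWCorner (C : Set (ℤ × ℤ)) (v : ℤ × ℤ) : Prop :=
  v ∈ C ∧ (v.1 + 1, v.2) ∈ C ∧ (v.1, v.2 - 1) ∈ C ∧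
    (v.1 - 1, v.2) ∉ C ∧ (v.1, v.2 + 1) ∉ C

/-- A hole of `C`: a finite connected component of the complement of `C`. -/
def IsHole (C H : Set (ℤ × ℤ)) : Prop :=
  H.Finite ∧ ∃ p ∈ Cᶜ, H = {q | ReachIn Cᶜ p q}

/-- One elimination step: remove a leaf, or a NE-corner belonging to a 4-cycle,
or a NW-corner belonging to a 4-cycle. -/
def ElimStep (C D : Set (ℤ × ℤ)) : Prop :=
  ∃ v, D = C \ {v} ∧
    (IsLeaf C v ∨ (IsNECorner C v ∧ (v.1 - 1, v.2 - 1) ∈ C) ∨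
      (IsNWCorner C v ∧ (v.1 + 1, v.2 - 1) ∈ C))

/-- Every finite nonempty connected contractible configuration with neither
leaves nor 4-cycles containing a NE-corner or a NW-corner is a single cell. -/

lemma gridAdj_iff {p q : ℤ × ℤ} : gridAdj p q ↔
    (q = (p.1 + 1, p.2) ∨ q = (p.1 - 1, p.2) ∨ q = (p.1, p.2 + 1) ∨ q = (p.1, p.2 - 1)) := by
  unfold gridAdj
  obtain ⟨a, b⟩ := p
  obtain ⟨c, d⟩ := q
  simp only [Prod.mk.injEq]
  have h1 := abs_nonneg (a - c)
  have h2 := abs_nonneg (b - d)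
  rcases abs_cases (a - c) with ⟨e1, _⟩ | ⟨e1, _⟩ <;>
    rcases abs_cases (b - d) with ⟨e2, _⟩ | ⟨e2, _⟩ <;> omega

lemma gridAdj_symm {p q : ℤ × ℤ} (h : gridAdj p q) : gridAdj q p := by
  unfold gridAdj at *
  rw [abs_sub_comm q.1 p.1, abs_sub_comm q.2 p.2]
  exact h

lemma gridAdj_mk {a b c d : ℤ} (h : (c = a + 1 ∧ d = b) ∨ (c = a - 1 ∧ d = b)
    ∨ (c = a ∧ d = b + 1) ∨ (c = a ∧ d = b - 1)) : gridAdj (a, b) (c, d) := by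
  rw [gridAdj_iff]
  simp only [Prod.mk.injEq]
  tauto

lemma gridAdj_ne {p q : ℤ × ℤ} (h : gridAdj p q) : p ≠ q := by
  intro hc
  subst hc
  unfold gridAdj at h
  simp at h

namespace ReachIn

lemma mem_right {S : Set (ℤ × ℤ)} {p q : ℤ × ℤ} (h : ReachIn S p q) : q ∈ S := by
  induction h with
  | refl hp => exact hp
  | tail _ _ hr _ => exact hr

lemma mem_left {S : Set (ℤ × ℤ)} {p q : ℤ × ℤ} (h : ReachIn S p q) : p ∈ S := by
  induction h with
  | refl hp => exact hp
  | tail _ _ _ ih => exact ih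

lemma mono {S T : Set (ℤ × ℤ)} (hST : S ⊆ T) {p q : ℤ × ℤ} (h : ReachIn S p q) :
    ReachIn T p q := by
  induction h with
  | refl hp => exact .refl (hST hp)
  | tail _ hadj hr ih => exact .tail ih hadj (hST hr)

lemma trans {S : Set (ℤ × ℤ)} {p q r : ℤ × ℤ} (h1 : ReachIn S p q) (h2 : ReachIn S q r) :
    ReachIn S p r := by
  induction h2 with
  | refl _ => exact h1
  | tail _ hadj hr ih => exact .tail ih hadj hr

lemma single {S : Set (ℤ × ℤ)} {p q : ℤ × ℤ} (hp : p ∈ S) (hq : q ∈ S) (h : gridAdj p q) :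
    ReachIn S p q := .tail (.refl hp) h hq

lemma symm {S : Set (ℤ × ℤ)} {p q : ℤ × ℤ} (h : ReachIn S p q) : ReachIn S q p := by
  induction h with
  | refl hp => exact .refl hp
  | @tail x y h hadj hy ih =>
      exact trans (single hy h.mem_right (gridAdj_symm hadj)) ih

end ReachIn

/-- Reachability avoiding a specific (undirected) edge `e`. -/
inductive ReachA (S : Set (ℤ × ℤ)) (e : (ℤ × ℤ) × (ℤ × ℤ)) : ℤ × ℤ → ℤ × ℤ → Prop
  | refl {p : ℤ × ℤ} (hp : p ∈ S) : ReachA S e p p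
  | tail {p q r : ℤ × ℤ} (h : ReachA S e p q) (hadj : gridAdj q r) (hr : r ∈ S)
      (h1 : ¬(q = e.1 ∧ r = e.2)) (h2 : ¬(q = e.2 ∧ r = e.1)) : ReachA S e p r

namespace ReachA

lemma mem_right {S e} {p q : ℤ × ℤ} (h : ReachA S e p q) : q ∈ S := by
  induction h with
  | refl hp => exact hp
  | tail _ _ hr _ _ _ => exact hr

lemma mem_left {S e} {p q : ℤ × ℤ} (h : ReachA S e p q) : p ∈ S := by
  induction h with
  | refl hp => exact hp
  | tail _ _ _ _ _ ih => exact ih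

lemma trans {S e} {p q r : ℤ × ℤ} (h1 : ReachA S e p q) (h2 : ReachA S e q r) :
    ReachA S e p r := by
  induction h2 with
  | refl _ => exact h1
  | tail _ hadj hr hn1 hn2 ih => exact .tail ih hadj hr hn1 hn2

lemma single {S e} {p q : ℤ × ℤ} (hp : p ∈ S) (hq : q ∈ S) (h : gridAdj p q)
    (h1 : ¬(p = e.1 ∧ q = e.2)) (h2 : ¬(p = e.2 ∧ q = e.1)) : ReachA S e p q :=
  .tail (.refl hp) h hq h1 h2

/-- Transfer a `ReachIn` within a subset avoiding the endpoints of `e` into `ReachA`. -/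
lemma of_reachIn {S T : Set (ℤ × ℤ)} {e} (hTS : T ⊆ S)
    (hT1 : e.1 ∉ T) {p q : ℤ × ℤ} (h : ReachIn T p q) : ReachA S e p q := by
  induction h with
  | refl hp => exact .refl (hTS hp)
  | @tail x y h hadj hy ih =>
      exact .tail ih hadj (hTS hy)
        (fun hc => hT1 (hc.1 ▸ h.mem_right)) (fun hc => hT1 (hc.2 ▸ hy))

end ReachA

section U

def indA (δ : ℤ) (z u : ℤ × ℤ) : ZMod 2 :=
  if u.1 ≤ z.1 - δ ∧ z.2 + 1 ≤ u.2 then 1 else 0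

def Upot (δ : ℤ) : List (ℤ × ℤ) → (ℤ × ℤ) → ZMod 2
  | a :: b :: t, z => (if a.2 = b.2 then indA δ z a + indA δ z b else 0) + Upot δ (b :: t) z
  | _, _ => 0

def Lpot (δ : ℤ) : List (ℤ × ℤ) → (ℤ × ℤ) → ZMod 2
  | a :: b :: t, z => (if a.2 = b.2 then 0 else indA δ z a + indA δ z b) + Lpot δ (b :: t) z
  | _, _ => 0

lemma indA_add_self (δ : ℤ) (z u : ℤ × ℤ) : indA δ z u + indA δ z u = 0 := by
  unfold indA; split_ifs <;> decide

lemma UL_telescope (δ : ℤ) (z : ℤ × ℤ) :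
    ∀ (Q : List (ℤ × ℤ)) (a : ℤ × ℤ),
      Upot δ (a :: Q) z + Lpot δ (a :: Q) z
        = indA δ z a + indA δ z ((a :: Q).getLast (List.cons_ne_nil a Q)) := by
  intro Q
  induction Q with
  | nil =>
      intro a
      show (0 : ZMod 2) + 0 = indA δ z a + indA δ z a
      rw [indA_add_self]
      ring
  | cons b t ih =>
      intro a
      have hlast : ((a :: b :: t).getLast (List.cons_ne_nil a (b :: t)))
          = ((b :: t).getLast (List.cons_ne_nil b t)) := by
        simp [List.getLast]
      rw [hlast]
      show ((if a.2 = b.2 then indA δ z a + indA δ z b else 0) + Upot δ (b :: t) z)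
          + ((if a.2 = b.2 then 0 else indA δ z a + indA δ z b) + Lpot δ (b :: t) z)
          = _
      have hif : (if a.2 = b.2 then indA δ z a + indA δ z b else 0)
          + (if a.2 = b.2 then 0 else indA δ z a + indA δ z b)
          = indA δ z a + indA δ z b := by
        split_ifs <;> ring
      have := ih a  -- dummy
      have h2 := ih b
      calc ((if a.2 = b.2 then indA δ z a + indA δ z b else 0) + Upot δ (b :: t) z)
          + ((if a.2 = b.2 then 0 else indA δ z a + indA δ z b) + Lpot δ (b :: t) z)
          = ((if a.2 = b.2 then indA δ z a + indA δ z b else 0)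
            + (if a.2 = b.2 then 0 else indA δ z a + indA δ z b))
            + (Upot δ (b :: t) z + Lpot δ (b :: t) z) := by ring
        _ = (indA δ z a + indA δ z b) + (indA δ z b + indA δ z ((b :: t).getLast (List.cons_ne_nil b t))) := by
            rw [hif, h2]
        _ = indA δ z a + indA δ z ((b :: t).getLast (List.cons_ne_nil b t)) := by
            rw [show indA δ z a + indA δ z b + (indA δ z b + indA δ z ((b :: t).getLast (List.cons_ne_nil b t)))
              = indA δ z a + (indA δ z b + indA δ z b) + indA δ z ((b :: t).getLast (List.cons_ne_nil b t)) by ring,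
              indA_add_self]
            ring
  


lemma prod_ne_iff {a z : ℤ × ℤ} : a ≠ z ↔ ¬(a.1 = z.1 ∧ a.2 = z.2) := by
  constructor
  · intro h hc; exact h (Prod.ext hc.1 hc.2)
  · intro h hc; exact h ⟨by rw [hc], by rw [hc]⟩

lemma stepH_vert {δ : ℤ} (hδ : δ = 0 ∨ δ = 1) {a b z z' : ℤ × ℤ}
    (hab : gridAdj a b) (hrow : a.2 = b.2)
    (hv : z' = (z.1, z.2 + 1) ∨ z' = (z.1, z.2 - 1))
    (haz' : a ≠ z') (hbz' : b ≠ z') (haz : a ≠ z) (hbz : b ≠ z) :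
    indA δ z' a + indA δ z' b = indA δ z a + indA δ z b := by
  have h := gridAdj_iff.1 hab
  rw [prod_ne_iff] at haz' hbz' haz hbz
  obtain ⟨a1, a2⟩ := a
  obtain ⟨b1, b2⟩ := b
  obtain ⟨z1, z2⟩ := z
  simp only [Prod.mk.injEq] at h
  dsimp only at hrow
  rcases hv with hv | hv <;> subst hv <;>
    dsimp only at haz' hbz' haz hbz <;>
    unfold indA <;> dsimp only <;>
    split_ifs <;> first | rfl | decide | (exfalso; omega)

lemma stepV_horiz {δ : ℤ} (hδ : δ = 0 ∨ δ = 1) {a b z z' : ℤ × ℤ}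
    (hab : gridAdj a b) (hrow : a.2 ≠ b.2)
    (hv : z' = (z.1 + 1, z.2) ∨ z' = (z.1 - 1, z.2))
    (haz' : a ≠ z') (hbz' : b ≠ z') (haz : a ≠ z) (hbz : b ≠ z) :
    indA δ z' a + indA δ z' b = indA δ z a + indA δ z b := by
  have h := gridAdj_iff.1 hab
  rw [prod_ne_iff] at haz' hbz' haz hbz
  obtain ⟨a1, a2⟩ := a
  obtain ⟨b1, b2⟩ := b
  obtain ⟨z1, z2⟩ := z
  simp only [Prod.mk.injEq] at h
  dsimp only at hrow
  rcases hv with hv | hv <;> subst hv <;>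
    dsimp only at haz' hbz' haz hbz <;>
    unfold indA <;> dsimp only <;>
    split_ifs <;> first | rfl | decide | (exfalso; omega)

lemma Upot_vert {δ : ℤ} (hδ : δ = 0 ∨ δ = 1) {z z' : ℤ × ℤ}
    (hv : z' = (z.1, z.2 + 1) ∨ z' = (z.1, z.2 - 1)) :
    ∀ (Q : List (ℤ × ℤ)), Q.Chain' gridAdj → z ∉ Q → z' ∉ Q →
      Upot δ Q z' = Upot δ Q z := by
  intro Q
  induction Q with
  | nil => intro _ _ _; rfl
  | cons a t ih =>
      intro hch hz hz'
      match t with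
      | [] => rfl
      | b :: t' =>
          have hch' : (b :: t').Chain' gridAdj := (List.isChain_cons_cons.1 hch).2
          have hab : gridAdj a b := (List.isChain_cons_cons.1 hch).1
          have hza : z ≠ a := fun h => hz (h ▸ @List.mem_cons_self _ a _)
          have hzb : z ∉ b :: t' := fun h => hz (List.mem_cons_of_mem a h)
          have hz'a : z' ≠ a := fun h => hz' (h ▸ @List.mem_cons_self _ a _)
          have hz'b : z' ∉ b :: t' := fun h => hz' (List.mem_cons_of_mem a h)
          show (if a.2 = b.2 then indA δ z' a + indA δ z' b else 0) + Upot δ (b :: t') z'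
              = (if a.2 = b.2 then indA δ z a + indA δ z b else 0) + Upot δ (b :: t') z
          rw [ih hch' hzb hz'b]
          congr 1
          split_ifs with hrow
          · exact stepH_vert hδ hab hrow hv (fun h => hz'a h.symm)
              (fun h => hz'b (h ▸ @List.mem_cons_self _ b _)) (fun h => hza h.symm)
              (fun h => hzb (h ▸ @List.mem_cons_self _ b _))
          · rfl

lemma Lpot_horiz {δ : ℤ} (hδ : δ = 0 ∨ δ = 1) {z z' : ℤ × ℤ}
    (hv : z' = (z.1 + 1, z.2) ∨ z' = (z.1 - 1, z.2)) :
    ∀ (Q : List (ℤ × ℤ)), Q.Chain' gridAdj → z ∉ Q → z' ∉ Q →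
      Lpot δ Q z' = Lpot δ Q z := by
  intro Q
  induction Q with
  | nil => intro _ _ _; rfl
  | cons a t ih =>
      intro hch hz hz'
      match t with
      | [] => rfl
      | b :: t' =>
          have hch' : (b :: t').Chain' gridAdj := (List.isChain_cons_cons.1 hch).2
          have hab : gridAdj a b := (List.isChain_cons_cons.1 hch).1
          have hza : z ≠ a := fun h => hz (h ▸ @List.mem_cons_self _ a _)
          have hzb : z ∉ b :: t' := fun h => hz (List.mem_cons_of_mem a h)
          have hz'a : z' ≠ a := fun h => hz' (h ▸ @List.mem_cons_self _ a _)
          have hz'b : z' ∉ b :: t' := fun h => hz' (List.mem_cons_of_mem a h)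
          show (if a.2 = b.2 then 0 else indA δ z' a + indA δ z' b) + Lpot δ (b :: t') z'
              = (if a.2 = b.2 then 0 else indA δ z a + indA δ z b) + Lpot δ (b :: t') z
          rw [ih hch' hzb hz'b]
          congr 1
          split_ifs with hrow
          · rfl
          · exact stepV_horiz hδ hab hrow hv (fun h => hz'a h.symm)
              (fun h => hz'b (h ▸ @List.mem_cons_self _ b _)) (fun h => hza h.symm)
              (fun h => hzb (h ▸ @List.mem_cons_self _ b _))


lemma zmod2_add_self (x : ZMod 2) : x + x = 0 := by
  have h2 : (2 : ZMod 2) = 0 := rfl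
  rw [← two_mul, h2, zero_mul]

lemma UL_id {δ : ℤ} {Q : List (ℤ × ℤ)} {m o : ℤ × ℤ}
    (hhead : Q.head? = some m) (hlast : Q.getLast? = some o) (z : ℤ × ℤ) :
    Upot δ Q z + Lpot δ Q z = indA δ z m + indA δ z o := by
  match Q with
  | [] => simp at hhead
  | a :: t =>
      have ha : a = m := by simpa using hhead
      have hl : (a :: t).getLast (List.cons_ne_nil a t) = o := by
        rw [List.getLast?_eq_getLast (List.cons_ne_nil a t)] at hlast
        simpa using hlast
      rw [UL_telescope δ z t a, hl, ha]

lemma chi_horiz {δ s Y' : ℤ} (hδ : δ = 0 ∨ δ = 1) {u u' : ℤ × ℤ}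
    (hx : u' = (u.1 + 1, u.2) ∨ u' = (u.1 - 1, u.2))
    (hmu : u ≠ (s, Y' - 1)) (hmu' : u' ≠ (s, Y' - 1))
    (hne1 : ¬(u = (s + δ - 1, Y') ∧ u' = (s + δ, Y')))
    (hne2 : ¬(u = (s + δ, Y') ∧ u' = (s + δ - 1, Y'))) :
    indA δ u' (s, Y' - 1) + indA δ u' (s, Y' + 1)
      = indA δ u (s, Y' - 1) + indA δ u (s, Y' + 1) := by
  obtain ⟨u1, u2⟩ := u
  obtain ⟨v1, v2⟩ := u'
  simp only [ne_eq, Prod.mk.injEq] at hx hmu hmu' hne1 hne2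
  unfold indA
  dsimp only
  split_ifs <;> first | rfl | decide | (exfalso; omega)

lemma U_edge {D : Set (ℤ × ℤ)} {δ s Y' : ℤ} {Q : List (ℤ × ℤ)}
    (hδ : δ = 0 ∨ δ = 1) (hch : Q.Chain' gridAdj)
    (hhead : Q.head? = some (s, Y' - 1)) (hlast : Q.getLast? = some (s, Y' + 1))
    (hQD : ∀ x ∈ Q, x ∉ D) (hm : (s, Y' - 1) ∉ D)
    {u u' : ℤ × ℤ} (hu : u ∈ D) (hu' : u' ∈ D) (hadj : gridAdj u u')
    (hne1 : ¬(u = (s + δ - 1, Y') ∧ u' = (s + δ, Y')))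
    (hne2 : ¬(u = (s + δ, Y') ∧ u' = (s + δ - 1, Y'))) :
    Upot δ Q u' = Upot δ Q u := by
  have huQ : u ∉ Q := fun h => hQD u h hu
  have hu'Q : u' ∉ Q := fun h => hQD u' h hu'
  rcases gridAdj_iff.1 hadj with hx | hx | hx | hx
  · -- horizontal, u' = (u.1+1, u.2)
    have hL : Lpot δ Q u' = Lpot δ Q u :=
      Lpot_horiz hδ (Or.inl hx) Q hch huQ hu'Q
    have h1 := UL_id (δ := δ) hhead hlast u
    have h2 := UL_id (δ := δ) hhead hlast u'
    have hchi := chi_horiz hδ (Or.inl hx) (fun h => hm (h ▸ hu)) (fun h => hm (h ▸ hu')) hne1 hne2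
    have : Upot δ Q u' + Lpot δ Q u' = Upot δ Q u + Lpot δ Q u := by rw [h1, h2, hchi]
    rw [hL] at this
    have := congrArg (· + Lpot δ Q u) this
    simpa [add_assoc, zmod2_add_self] using this
  · have hL : Lpot δ Q u' = Lpot δ Q u :=
      Lpot_horiz hδ (Or.inr hx) Q hch huQ hu'Q
    have h1 := UL_id (δ := δ) hhead hlast u
    have h2 := UL_id (δ := δ) hhead hlast u'
    have hchi := chi_horiz hδ (Or.inr hx) (fun h => hm (h ▸ hu)) (fun h => hm (h ▸ hu')) hne1 hne2
    have : Upot δ Q u' + Lpot δ Q u' = Upot δ Q u + Lpot δ Q u := by rw [h1, h2, hchi]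
    rw [hL] at this
    have := congrArg (· + Lpot δ Q u) this
    simpa [add_assoc, zmod2_add_self] using this
  · exact Upot_vert hδ (Or.inl hx) Q hch huQ hu'Q
  · exact Upot_vert hδ (Or.inr hx) Q hch huQ hu'Q

lemma U_estep {D : Set (ℤ × ℤ)} {δ s Y' : ℤ} {Q : List (ℤ × ℤ)}
    (hδ : δ = 0 ∨ δ = 1) (hch : Q.Chain' gridAdj)
    (hhead : Q.head? = some (s, Y' - 1)) (hlast : Q.getLast? = some (s, Y' + 1))
    (hQD : ∀ x ∈ Q, x ∉ D)
    (hpL : (s + δ - 1, Y') ∈ D) (hpR : (s + δ, Y') ∈ D) :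
    Upot δ Q (s + δ, Y') = Upot δ Q (s + δ - 1, Y') + 1 := by
  have huQ : (s + δ - 1, Y') ∉ Q := fun h => hQD _ h hpL
  have hu'Q : (s + δ, Y') ∉ Q := fun h => hQD _ h hpR
  have hx : ((s + δ, Y') : ℤ × ℤ) = (((s + δ - 1 : ℤ), (Y' : ℤ)).1 + 1, ((s + δ - 1 : ℤ), (Y' : ℤ)).2) := by
    exact Prod.ext (by dsimp; ring) (by dsimp)
  have hL : Lpot δ Q (s + δ, Y') = Lpot δ Q (s + δ - 1, Y') :=
    Lpot_horiz hδ (Or.inl hx) Q hch huQ hu'Q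
  have h1 := UL_id (δ := δ) hhead hlast (s + δ - 1, Y')
  have h2 := UL_id (δ := δ) hhead hlast (s + δ, Y')
  have hchiL : indA δ ((s + δ - 1 : ℤ), Y') ((s : ℤ), Y' - 1) + indA δ ((s + δ - 1 : ℤ), Y') ((s : ℤ), Y' + 1) = 0 := by
    unfold indA
    dsimp only
    split_ifs <;> first | rfl | decide | (exfalso; omega)
  have hchiR : indA δ ((s + δ : ℤ), Y') ((s : ℤ), Y' - 1) + indA δ ((s + δ : ℤ), Y') ((s : ℤ), Y' + 1) = 1 := by
    unfold indA
    dsimp only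
    split_ifs <;> first | rfl | decide | (exfalso; omega)
  rw [hchiL] at h1
  rw [hchiR] at h2
  rw [hL] at h2
  -- h1 : U pL + L pL = 0, h2 : U pR + L pL = 1
  have e1 : Upot δ Q (s + δ, Y') = 1 + Lpot δ Q ((s + δ - 1 : ℤ), Y') := by
    have := congrArg (· + Lpot δ Q ((s + δ - 1 : ℤ), Y')) h2
    simpa [add_assoc, zmod2_add_self] using this
  have e2 : Upot δ Q (s + δ - 1, Y') = Lpot δ Q ((s + δ - 1 : ℤ), Y') := by
    have := congrArg (· + Lpot δ Q ((s + δ - 1 : ℤ), Y')) h1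
    simpa [add_assoc, zmod2_add_self] using this
  rw [e1, e2]
  ring
end U


section Bridge

lemma exists_walk_list {S : Set (ℤ × ℤ)} {a b : ℤ × ℤ} (h : ReachIn S a b) :
    ∃ Q : List (ℤ × ℤ), Q.Chain' gridAdj ∧ Q.head? = some a ∧ Q.getLast? = some b ∧
      ∀ x ∈ Q, x ∈ S := by
  induction h with
  | refl hp => exact ⟨[a], List.isChain_singleton a, rfl, rfl, by simp [hp]⟩
  | @tail x y h hadj hy ih =>
      obtain ⟨Q, hch, hhead, hlast, hmem⟩ := ih
      refine ⟨Q ++ [y], ?_, ?_, ?_, ?_⟩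
      · rw [List.Chain', List.isChain_append]
        refine ⟨hch, List.isChain_singleton y, ?_⟩
        intro u hu v hv
        simp only [List.head?_cons, Option.mem_def, Option.some.injEq] at hv
        rw [hlast] at hu
        simp only [Option.mem_def, Option.some.injEq] at hu
        subst hu
        subst hv
        exact hadj
      · cases Q with
        | nil => simp at hhead
        | cons c t => simpa using hhead
      · rw [List.getLast?_append]
        simp
      · intro u hu
        rcases List.mem_append.1 hu with h' | h'
        · exact hmem u h'
        · simp only [List.mem_singleton] at h'
          exact h' ▸ hy

lemma zmod2_succ_ne (x : ZMod 2) : x + 1 ≠ x := by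
  intro h
  have h1 : (1 : ZMod 2) = 0 := by
    calc (1 : ZMod 2) = 1 + (x + x) := by rw [zmod2_add_self, add_zero]
    _ = (x + 1) + x := by ring
    _ = x + x := by rw [h]
    _ = 0 := zmod2_add_self x
  exact one_ne_zero h1

lemma reachA_Uconst {D : Set (ℤ × ℤ)} {δ s Y' : ℤ} {Q : List (ℤ × ℤ)}
    (hδ : δ = 0 ∨ δ = 1) (hch : Q.Chain' gridAdj)
    (hhead : Q.head? = some (s, Y' - 1)) (hlast : Q.getLast? = some (s, Y' + 1))
    (hQD : ∀ x ∈ Q, x ∉ D) (hm : (s, Y' - 1) ∉ D)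
    {a b : ℤ × ℤ} (h : ReachA D ((s + δ - 1, Y'), (s + δ, Y')) a b) :
    Upot δ Q a = Upot δ Q b := by
  induction h with
  | refl _ => rfl
  | @tail x y h hadj hy hn1 hn2 ih =>
      rw [ih]
      exact (U_edge hδ hch hhead hlast hQD hm h.mem_right hy hadj hn1 hn2).symm

lemma bridge {D : Set (ℤ × ℤ)} (hconn : ConnectedConf D) (hcontr : Contractible D)
    {δ s Y' : ℤ} (hδ : δ = 0 ∨ δ = 1)
    (hm : (s, Y' - 1) ∉ D) (ho : (s, Y' + 1) ∉ D)
    (hpL : (s + δ - 1, Y') ∈ D) (hpR : (s + δ, Y') ∈ D) :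
    ∃ S : Set (ℤ × ℤ), S ⊆ D ∧ (s + δ - 1, Y') ∈ S ∧ (s + δ, Y') ∉ S ∧
      (∀ z ∈ S, ReachIn S (s + δ - 1, Y') z) ∧
      (∀ z ∈ D, z ∉ S → ReachIn (D \ S) (s + δ, Y') z) ∧
      (∀ u ∈ S, ∀ t ∈ D, gridAdj u t →
        ¬(u = (s + δ - 1, Y') ∧ t = (s + δ, Y')) →
        ¬(u = (s + δ, Y') ∧ t = (s + δ - 1, Y')) → t ∈ S) ∧
      (∀ u, ReachA D ((s + δ - 1, Y'), (s + δ, Y')) u (s + δ - 1, Y') → u ∈ S) ∧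
      (∀ u, ReachA D ((s + δ - 1, Y'), (s + δ, Y')) u (s + δ, Y') → u ∉ S) := by
  set pL : ℤ × ℤ := (s + δ - 1, Y') with hpLdef
  set pR : ℤ × ℤ := (s + δ, Y') with hpRdef
  obtain ⟨Q, hch, hhead, hlast, hmem⟩ :=
    exists_walk_list (hcontr (s, Y' - 1) hm (s, Y' + 1) ho)
  have hQD : ∀ x ∈ Q, x ∉ D := fun x hx => hmem x hx
  set U : (ℤ × ℤ) → ZMod 2 := Upot δ Q with hUdef
  have hstep : U pR = U pL + 1 := U_estep hδ hch hhead hlast hQD hpL hpR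
  set S : Set (ℤ × ℤ) := {z | z ∈ D ∧ U z = U pL} with hSdef
  have hSsub : S ⊆ D := fun z hz => hz.1
  have hpLS : pL ∈ S := ⟨hpL, rfl⟩
  have hpRS : pR ∉ S := fun hc => zmod2_succ_ne (U pL) (hstep ▸ hc.2)
  have hedge : ∀ u u', u ∈ D → u' ∈ D → gridAdj u u' →
      ¬(u = pL ∧ u' = pR) → ¬(u = pR ∧ u' = pL) → U u' = U u :=
    fun u u' hu hu' hadj h1 h2 => U_edge hδ hch hhead hlast hQD hm hu hu' hadj h1 h2
  have dich : ∀ z, ReachIn D pL z →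
      (z ∈ S ∧ ReachIn S pL z) ∨ (U z = U pL + 1 ∧ ReachIn (D \ S) pR z) := by
    intro z hz
    induction hz with
    | refl _ => exact Or.inl ⟨hpLS, .refl hpLS⟩
    | @tail x y h hadj hy ih =>
        by_cases hcase : (x = pL ∧ y = pR) ∨ (x = pR ∧ y = pL)
        · rcases hcase with ⟨h1, h2⟩ | ⟨h1, h2⟩
          · subst h2
            exact Or.inr ⟨hstep, .refl ⟨hpR, hpRS⟩⟩
          · subst h2
            exact Or.inl ⟨hpLS, .refl hpLS⟩
        · push_neg at hcase
          have hUy : U y = U x :=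
            hedge x y h.mem_right hy hadj
              (fun hc => (hcase.1 hc.1) hc.2) (fun hc => (hcase.2 hc.1) hc.2)
          rcases ih with ⟨hxS, hre⟩ | ⟨hUx, hre⟩
          · exact Or.inl ⟨⟨hy, hUy.trans hxS.2⟩, .tail hre hadj ⟨hy, hUy.trans hxS.2⟩⟩
          · refine Or.inr ⟨hUy.trans hUx, .tail hre hadj ⟨hy, ?_⟩⟩
            intro hc
            exact zmod2_succ_ne (U pL) ((hUy.trans hUx) ▸ hc.2)
  refine ⟨S, hSsub, hpLS, hpRS, ?_, ?_, ?_, ?_, ?_⟩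
  · intro z hz
    rcases dich z (hconn.2 pL hpL z (hSsub hz)) with ⟨_, hre⟩ | ⟨hUz, _⟩
    · exact hre
    · exact absurd (hUz ▸ hz.2 : U pL + 1 = U pL) (zmod2_succ_ne (U pL))
  · intro z hzD hzS
    rcases dich z (hconn.2 pL hpL z hzD) with ⟨hzS', _⟩ | ⟨_, hre⟩
    · exact absurd hzS' hzS
    · exact hre
  · intro u hu t ht hadj h1 h2
    exact ⟨ht, (hedge u t (hSsub hu) ht hadj h1 h2).trans hu.2⟩
  · intro u hre
    exact ⟨hre.mem_left, reachA_Uconst hδ hch hhead hlast hQD hm hre⟩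
  · intro u hre
    intro hc
    have h1 : U u = U pR := reachA_Uconst hδ hch hhead hlast hQD hm hre
    rw [hstep] at h1
    exact zmod2_succ_ne (U pL) (h1 ▸ hc.2 : U pL + 1 = U pL)

end Bridge

def TypeT (D : Set (ℤ × ℤ)) : Prop :=
  ConnectedConf D ∧ Contractible D ∧
  (∀ u v, IsLeaf D u → IsLeaf D v → u = v) ∧
  (∀ u, IsLeaf D u → ∀ x ∈ D, x.2 ≤ u.2) ∧
  (∀ v, IsNECorner D v → (v.1 - 1, v.2 - 1) ∉ D) ∧
  (∀ v, IsNWCorner D v → (v.1 + 1, v.2 - 1) ∉ D)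

section Assembly

lemma assembly {D S : Set (ℤ × ℤ)} {w1 c01 Y' : ℤ}
    (hDfin : D.Finite) (hcontr : Contractible D)
    (hnbDne : ∀ v, IsNECorner D v → (v.1 - 1, v.2 - 1) ∉ D)
    (hnbDnw : ∀ v, IsNWCorner D v → (v.1 + 1, v.2 - 1) ∉ D)
    (hwc0 : c01 = w1 + 1 ∨ c01 = w1 - 1)
    (hSsub : S ⊆ D) (hwS : (w1, Y') ∈ S) (hc0S : (c01, Y') ∉ S) (hc0D : (c01, Y') ∈ D)
    (hSconn : ∀ z ∈ S, ReachIn S (w1, Y') z)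
    (hScconn : ∀ z ∈ D, z ∉ S → ReachIn (D \ S) (c01, Y') z)
    (hclosure : ∀ u ∈ S, ∀ t ∈ D, gridAdj u t →
      ¬(u = (w1, Y') ∧ t = (c01, Y')) → ¬(u = (c01, Y') ∧ t = (w1, Y')) → t ∈ S)
    (hfar : (2 * w1 - c01, Y') ∉ D) (hnorth : (w1, Y' + 1) ∉ D) (hsouth : (w1, Y' - 1) ∈ D)
    (hc0up : (c01, Y' + 1) ∉ D)
    (h_above : ∀ u ∈ S, u.2 ≤ Y') (h_leaf : ∀ u, IsLeaf D u → u ∉ S) :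
    TypeT S ∧ S.Finite ∧ S.ncard < D.ncard ∧ 2 ≤ S.ncard := by
  have hadj_sw : gridAdj (w1, Y') (w1, Y' - 1) := gridAdj_mk (by tauto)
  have hsS : (w1, Y' - 1) ∈ S := by
    refine hclosure _ hwS _ hsouth hadj_sw ?_ ?_
    · rintro ⟨-, h2⟩
      have := congrArg Prod.snd h2
      dsimp only at this
      omega
    · rintro ⟨h1, -⟩
      have := congrArg Prod.fst h1
      dsimp only at this
      omega
  have hwne : ((w1 : ℤ), Y') ≠ ((c01 : ℤ), Y') := by
    intro h
    have := congrArg Prod.fst h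
    dsimp only at this
    omega
  -- membership transfer for u ≠ w
  have htrans : ∀ u ∈ S, u ≠ (w1, Y') → ∀ t, gridAdj u t → (t ∈ S ↔ t ∈ D) := by
    intro u huS hune t hadj
    constructor
    · exact fun h => hSsub h
    · intro htD
      refine hclosure u huS t htD hadj ?_ ?_
      · rintro ⟨h1, -⟩; exact hune h1
      · rintro ⟨h1, -⟩; exact hc0S (h1 ▸ huS)
  have hconnS : ConnectedConf S :=
    ⟨⟨(w1, Y'), hwS⟩, fun p hp q hq => (hSconn p hp).symm.trans (hSconn q hq)⟩
  have hSc : ∀ x, x ∉ S → ReachIn Sᶜ x (c01, Y' + 1) := by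
    intro x hx
    have ho'S : ((c01 : ℤ), Y' + 1) ∉ S := fun h => hc0up (hSsub h)
    by_cases hxD : x ∈ D
    · have h1 : ReachIn (D \ S) (c01, Y') x := hScconn x hxD hx
      have h2 : ReachIn Sᶜ x (c01, Y') := (h1.symm).mono (fun z hz => hz.2)
      exact h2.tail (gridAdj_mk (by tauto)) ho'S
    · exact (hcontr x hxD (c01, Y' + 1) hc0up).mono
        (fun z (hz : z ∉ D) => fun hc => hz (hSsub hc))
  have hcontrS : Contractible S := by
    intro p hp q hq
    exact (hSc p hp).trans (hSc q hq).symm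
  -- corner and leaf transfer
  have hne_corner : ∀ v, IsNECorner S v → (v.1 - 1, v.2 - 1) ∉ S := by
    rintro ⟨v1, v2⟩ ⟨hvS, hW, hS', hE, hN⟩ hdiag
    by_cases hvw : ((v1 : ℤ), v2) = ((w1 : ℤ), Y')
    · rw [hvw] at hW
      dsimp only at hW
      rcases hwc0 with h | h
      · refine hfar ?_
        have hpair : ((2 * w1 - c01 : ℤ), (Y' : ℤ)) = ((w1 - 1 : ℤ), (Y' : ℤ)) :=
          Prod.ext (by dsimp; omega) rfl
        rw [hpair]
        exact hSsub hW
      · refine absurd ?_ hc0S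
        have hpair : ((c01 : ℤ), (Y' : ℤ)) = ((w1 - 1 : ℤ), (Y' : ℤ)) :=
          Prod.ext (by dsimp; omega) rfl
        rw [hpair]
        exact hW
    · have htr := htrans _ hvS hvw
      refine hnbDne (v1, v2) ⟨hSsub hvS, hSsub hW, hSsub hS', ?_, ?_⟩ (hSsub hdiag)
      · intro hc
        exact hE ((htr _ (gridAdj_mk (by tauto))).2 hc)
      · intro hc
        exact hN ((htr _ (gridAdj_mk (by tauto))).2 hc)
  have hnw_corner : ∀ v, IsNWCorner S v → (v.1 + 1, v.2 - 1) ∉ S := by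
    rintro ⟨v1, v2⟩ ⟨hvS, hE, hS', hW, hN⟩ hdiag
    by_cases hvw : ((v1 : ℤ), v2) = ((w1 : ℤ), Y')
    · rw [hvw] at hE
      dsimp only at hE
      rcases hwc0 with h | h
      · refine absurd ?_ hc0S
        have hpair : ((c01 : ℤ), (Y' : ℤ)) = ((w1 + 1 : ℤ), (Y' : ℤ)) :=
          Prod.ext (by dsimp; omega) rfl
        rw [hpair]
        exact hE
      · refine hfar ?_
        have hpair : ((2 * w1 - c01 : ℤ), (Y' : ℤ)) = ((w1 + 1 : ℤ), (Y' : ℤ)) :=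
          Prod.ext (by dsimp; omega) rfl
        rw [hpair]
        exact hSsub hE
    · have htr := htrans _ hvS hvw
      refine hnbDnw (v1, v2) ⟨hSsub hvS, hSsub hE, hSsub hS', ?_, ?_⟩ (hSsub hdiag)
      · intro hc
        exact hW ((htr _ (gridAdj_mk (by tauto))).2 hc)
      · intro hc
        exact hN ((htr _ (gridAdj_mk (by tauto))).2 hc)
  have hleafw : ∀ u, IsLeaf S u → u = (w1, Y') := by
    intro u hu
    by_contra hune
    have htr := htrans u hu.1 hune
    obtain ⟨huS, t0, ⟨ht0S, ht0adj⟩, huniq⟩ := hu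
    have : IsLeaf D u := by
      refine ⟨hSsub huS, t0, ⟨hSsub ht0S, ht0adj⟩, ?_⟩
      intro t ⟨htD, htadj⟩
      exact huniq t ⟨(htr t htadj).2 htD, htadj⟩
    exact h_leaf u this huS
  refine ⟨⟨hconnS, hcontrS, ?_, ?_, hne_corner, hnw_corner⟩, hDfin.subset hSsub, ?_, ?_⟩
  · intro u v hu hv
    rw [hleafw u hu, hleafw v hv]
  · intro u hu x hx
    rw [hleafw u hu]
    exact h_above x hx
  · exact Set.ncard_lt_ncard ⟨hSsub, fun hc => hc0S (hc hc0D)⟩ hDfin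
  · have h2 : 1 < S.ncard := by
      rw [Set.one_lt_ncard_iff (hDfin.subset hSsub)]
      refine ⟨(w1, Y'), (w1, Y' - 1), hwS, hsS, ?_⟩
      intro h
      have := congrArg Prod.snd h
      dsimp only at this
      omega
    omega

end Assembly

section Helpers

lemma bddX_above {D : Set (ℤ × ℤ)} (h : D.Finite) : ∃ B : ℤ, ∀ u ∈ D, u.1 ≤ B := by
  obtain ⟨B, hB⟩ := (h.image Prod.fst).bddAbove
  exact ⟨B, fun u hu => hB ⟨u, hu, rfl⟩⟩

lemma bddX_below {D : Set (ℤ × ℤ)} (h : D.Finite) : ∃ B : ℤ, ∀ u ∈ D, B ≤ u.1 := by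
  obtain ⟨B, hB⟩ := (h.image Prod.fst).bddBelow
  exact ⟨B, fun u hu => hB ⟨u, hu, rfl⟩⟩

lemma exists_top {D : Set (ℤ × ℤ)} (h : D.Finite) (hne : D.Nonempty) :
    ∃ Y : ℤ, (∃ u ∈ D, u.2 = Y) ∧ ∀ u ∈ D, u.2 ≤ Y := by
  obtain ⟨u, huD, hu⟩ := Set.exists_max_image D Prod.snd h hne
  exact ⟨u.2, ⟨u, huD, rfl⟩, hu⟩

lemma interval_right {D : Set (ℤ × ℤ)} (hfin : D.Finite) {x0 Y : ℤ} (hx0 : (x0, Y) ∈ D) :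
    ∃ r : ℤ, x0 ≤ r ∧ (∀ t : ℤ, x0 ≤ t → t ≤ r → (t, Y) ∈ D) ∧ (r + 1, Y) ∉ D := by
  classical
  obtain ⟨B, hB⟩ := bddX_above hfin
  have hex : ∃ n : ℕ, (x0 + n + 1, Y) ∉ D := by
    refine ⟨(B - x0).toNat, fun hc => ?_⟩
    have := hB _ hc
    dsimp only at this
    omega
  set n0 := Nat.find hex with hn0
  refine ⟨x0 + n0, by omega, ?_, Nat.find_spec hex⟩
  intro t ht1 ht2
  rcases eq_or_lt_of_le ht1 with h | h
  · exact h ▸ hx0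
  · have hlt : (t - x0 - 1).toNat < n0 := by omega
    have := Nat.find_min hex hlt
    simp only [not_not] at this
    have hco : x0 + ((t - x0 - 1).toNat : ℤ) + 1 = t := by omega
    rwa [hco] at this

lemma interval_left {D : Set (ℤ × ℤ)} (hfin : D.Finite) {x0 Y : ℤ} (hx0 : (x0, Y) ∈ D) :
    ∃ l : ℤ, l ≤ x0 ∧ (∀ t : ℤ, l ≤ t → t ≤ x0 → (t, Y) ∈ D) ∧ (l - 1, Y) ∉ D := by
  classical
  obtain ⟨B, hB⟩ := bddX_below hfin
  have hex : ∃ n : ℕ, (x0 - n - 1, Y) ∉ D := by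
    refine ⟨(x0 - B).toNat, fun hc => ?_⟩
    have := hB _ hc
    dsimp only at this
    omega
  set n0 := Nat.find hex with hn0
  refine ⟨x0 - n0, by omega, ?_, by
    have := Nat.find_spec hex
    have hco : ((x0 : ℤ) - n0 - 1) = x0 - (n0 : ℤ) - 1 := by ring
    rwa [hco]⟩
  intro t ht1 ht2
  rcases eq_or_lt_of_le ht2 with h | h
  · exact h ▸ hx0
  · have hlt : (x0 - t - 1).toNat < n0 := by omega
    have := Nat.find_min hex hlt
    simp only [not_not] at this
    have hco : x0 - ((x0 - t - 1).toNat : ℤ) - 1 = t := by omega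
    rwa [hco] at this

lemma reach_ne_nbr {D : Set (ℤ × ℤ)} {u y : ℤ × ℤ} (h : ReachIn D u y) :
    y ≠ u → ∃ t ∈ D, gridAdj u t := by
  induction h with
  | refl _ => intro h; exact absurd rfl h
  | @tail x y h hadj hy ih =>
      intro _
      by_cases hx : x = u
      · exact ⟨y, hy, hx ▸ hadj⟩
      · exact ih hx

lemma exists_nbr {D : Set (ℤ × ℤ)} (hconn : ConnectedConf D) {u v : ℤ × ℤ}
    (hu : u ∈ D) (hv : v ∈ D) (huv : v ≠ u) : ∃ t ∈ D, gridAdj u t :=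
  reach_ne_nbr (hconn.2 u hu v hv) huv

lemma not_leaf_second {D : Set (ℤ × ℤ)} {u t1 : ℤ × ℤ} (hu : u ∈ D) (ht1 : t1 ∈ D)
    (hadj1 : gridAdj u t1) (hnl : ¬IsLeaf D u) : ∃ t2 ∈ D, gridAdj u t2 ∧ t2 ≠ t1 := by
  by_contra h
  push_neg at h
  exact hnl ⟨hu, t1, ⟨ht1, hadj1⟩, fun t ht => h t ht.1 ht.2⟩

lemma leaf_unique_nbr {D : Set (ℤ × ℤ)} {v : ℤ × ℤ} (h : IsLeaf D v) :
    ∃ w0, w0 ∈ D ∧ gridAdj v w0 ∧ ∀ t ∈ D, gridAdj v t → t = w0 := by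
  obtain ⟨hv, w0, ⟨hw0, hadj⟩, huniq⟩ := h
  exact ⟨w0, hw0, hadj, fun t ht hadjt => huniq t ⟨ht, hadjt⟩⟩

lemma reachA_run_west {D : Set (ℤ × ℤ)} {e : (ℤ × ℤ) × (ℤ × ℤ)} {Y : ℤ} :
    ∀ (n : ℕ) (a b : ℤ), a ≤ b → (n : ℤ) = b - a →
    (∀ t : ℤ, a ≤ t → t ≤ b → (t, Y) ∈ D) →
    (∀ t : ℤ, a ≤ t → t < b →
      ¬((t + 1, Y) = e.1 ∧ (t, Y) = e.2) ∧ ¬((t + 1, Y) = e.2 ∧ (t, Y) = e.1)) →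
    ReachA D e (b, Y) (a, Y) := by
  intro n
  induction n with
  | zero =>
      intro a b hab hn hmem _
      have : a = b := by omega
      subst this
      exact .refl (hmem a le_rfl le_rfl)
  | succ k ih =>
      intro a b hab hn hmem hav
      have h1 : ReachA D e (b, Y) (a + 1, Y) :=
        ih (a + 1) b (by omega) (by push_cast at hn ⊢; omega)
          (fun t ht1 ht2 => hmem t (by omega) ht2)
          (fun t ht1 ht2 => hav t (by omega) ht2)
      exact h1.tail (gridAdj_mk (by right; left; constructor <;> ring_nf)) (hmem a le_rfl hab)
        ((hav a le_rfl (by omega)).1) ((hav a le_rfl (by omega)).2)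

lemma reachA_run_east {D : Set (ℤ × ℤ)} {e : (ℤ × ℤ) × (ℤ × ℤ)} {Y : ℤ} :
    ∀ (n : ℕ) (a b : ℤ), a ≤ b → (n : ℤ) = b - a →
    (∀ t : ℤ, a ≤ t → t ≤ b → (t, Y) ∈ D) →
    (∀ t : ℤ, a ≤ t → t < b →
      ¬((t, Y) = e.1 ∧ (t + 1, Y) = e.2) ∧ ¬((t, Y) = e.2 ∧ (t + 1, Y) = e.1)) →
    ReachA D e (a, Y) (b, Y) := by
  intro n
  induction n with
  | zero =>
      intro a b hab hn hmem _
      have : a = b := by omega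
      subst this
      exact .refl (hmem a le_rfl le_rfl)
  | succ k ih =>
      intro a b hab hn hmem hav
      have h1 : ReachA D e (a, Y) (b - 1, Y) :=
        ih a (b - 1) (by omega) (by push_cast at hn ⊢; omega)
          (fun t ht1 ht2 => hmem t ht1 (by omega))
          (fun t ht1 ht2 => hav t ht1 (by omega))
      have h2 := h1.tail (q := (b - 1, Y)) (r := (b, Y))
        (gridAdj_mk (by left; constructor <;> ring_nf)) (hmem b (by omega) le_rfl)
      have h3 := hav (b - 1) (by omega) (by omega)
      have hco : (b - 1 + 1 : ℤ) = b := by ring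
      rw [hco] at h3
      exact h2 (h3.1) (h3.2)

lemma reachIn_delete {D : Set (ℤ × ℤ)} {v w0 : ℤ × ℤ}
    (huniq : ∀ t ∈ D, gridAdj v t → t = w0)
    {x : ℤ × ℤ} (hx : x ∈ D) (hxv : x ≠ v) :
    ∀ y, ReachIn D x y → (y ≠ v → ReachIn (D \ {v}) x y) ∧ (y = v → ReachIn (D \ {v}) x w0) := by
  intro y h
  induction h with
  | refl _ =>
      exact ⟨fun _ => .refl ⟨hx, hxv⟩, fun h => absurd h hxv⟩
  | @tail q r h hadj hr ih =>
      constructor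
      · intro hrv
        by_cases hqv : q = v
        · have hrw : r = w0 := huniq r hr (hqv ▸ hadj)
          exact hrw ▸ ih.2 hqv
        · exact .tail (ih.1 hqv) hadj ⟨hr, hrv⟩
      · intro hrv
        by_cases hqv : q = v
        · rw [hqv, hrv] at hadj
          exact absurd (rfl : v = v) (gridAdj_ne hadj)
        · have hq : q = w0 := huniq q h.mem_right (gridAdj_symm (hrv ▸ hadj))
          exact hq ▸ ih.1 hqv

end Helpers

section Spawn

lemma finish_spawn {n : ℕ}
    (IH : ∀ m, m < n → ∀ E : Set (ℤ × ℤ), E.Finite → TypeT E → E.ncard = m → E.ncard ≤ 1)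
    {D S : Set (ℤ × ℤ)} {w1 c01 Y' : ℤ}
    (hfin : D.Finite) (hcard : D.ncard = n) (hcontr : Contractible D)
    (hnbDne : ∀ v, IsNECorner D v → (v.1 - 1, v.2 - 1) ∉ D)
    (hnbDnw : ∀ v, IsNWCorner D v → (v.1 + 1, v.2 - 1) ∉ D)
    (hwc0 : c01 = w1 + 1 ∨ c01 = w1 - 1)
    (hSsub : S ⊆ D) (hwS : (w1, Y') ∈ S) (hc0S : (c01, Y') ∉ S) (hc0D : (c01, Y') ∈ D)
    (hSconn : ∀ z ∈ S, ReachIn S (w1, Y') z)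
    (hScconn : ∀ z ∈ D, z ∉ S → ReachIn (D \ S) (c01, Y') z)
    (hclosure : ∀ u ∈ S, ∀ t ∈ D, gridAdj u t →
      ¬(u = (w1, Y') ∧ t = (c01, Y')) → ¬(u = (c01, Y') ∧ t = (w1, Y')) → t ∈ S)
    (hfar : (2 * w1 - c01, Y') ∉ D) (hnorth : (w1, Y' + 1) ∉ D) (hsouth : (w1, Y' - 1) ∈ D)
    (hc0up : (c01, Y' + 1) ∉ D)
    (h_above : ∀ u ∈ S, u.2 ≤ Y') (h_leaf : ∀ u, IsLeaf D u → u ∉ S) : False := by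
  obtain ⟨hTS, hfinS, hlt, h2⟩ := assembly hfin hcontr hnbDne hnbDnw hwc0 hSsub hwS hc0S hc0D
    hSconn hScconn hclosure hfar hnorth hsouth hc0up h_above h_leaf
  have := IH S.ncard (by omega) S hfinS hTS rfl
  omega

lemma spawnL {n : ℕ}
    (IH : ∀ m, m < n → ∀ E : Set (ℤ × ℤ), E.Finite → TypeT E → E.ncard = m → E.ncard ≤ 1)
    {D : Set (ℤ × ℤ)} (hfin : D.Finite) (hcard : D.ncard = n)
    (hconn : ConnectedConf D) (hcontr : Contractible D)
    (hnbDne : ∀ v, IsNECorner D v → (v.1 - 1, v.2 - 1) ∉ D)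
    (hnbDnw : ∀ v, IsNWCorner D v → (v.1 + 1, v.2 - 1) ∉ D)
    {s Y' : ℤ}
    (hm : (s, Y' - 1) ∉ D) (ho : (s, Y' + 1) ∉ D)
    (hw : (s - 1, Y') ∈ D) (hc0 : (s, Y') ∈ D)
    (hfar : (s - 2, Y') ∉ D) (hwn : (s - 1, Y' + 1) ∉ D) (hws : (s - 1, Y' - 1) ∈ D)
    (hleafA : ∀ u, IsLeaf D u → ReachA D ((s - 1, Y'), (s, Y')) u (s, Y'))
    (habove : ∀ u ∈ D, Y' < u.2 → ReachA D ((s - 1, Y'), (s, Y')) u (s, Y')) : False := by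
  have h00 : (s : ℤ) + 0 = s := by ring
  obtain ⟨S, hSsub, hpLS, hpRS, hSconn, hScconn, hclos, hInL, hInR⟩ :=
    bridge hconn hcontr (δ := 0) (s := s) (Y' := Y') (Or.inl rfl) hm ho
      (by rw [h00]; exact hw) (by rw [h00]; exact hc0)
  rw [h00] at hpLS hpRS hSconn hScconn hclos hInL hInR
  refine finish_spawn IH hfin hcard hcontr hnbDne hnbDnw (w1 := s - 1) (c01 := s) (Y' := Y')
    (Or.inl (by ring)) hSsub hpLS hpRS hc0 hSconn hScconn hclos ?_ hwn hws ho ?_ ?_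
  · have hp : ((2 * (s - 1) - s : ℤ), Y') = ((s - 2 : ℤ), Y') := by
      refine Prod.ext ?_ rfl
      dsimp only
      ring
    rw [hp]
    exact hfar
  · intro u huS
    by_contra hub
    push_neg at hub
    exact hInR u (habove u (hSsub huS) hub) huS
  · intro u hu hcS
    exact hInR u (hleafA u hu) hcS

lemma spawnR {n : ℕ}
    (IH : ∀ m, m < n → ∀ E : Set (ℤ × ℤ), E.Finite → TypeT E → E.ncard = m → E.ncard ≤ 1)
    {D : Set (ℤ × ℤ)} (hfin : D.Finite) (hcard : D.ncard = n)
    (hconn : ConnectedConf D) (hcontr : Contractible D)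
    (hnbDne : ∀ v, IsNECorner D v → (v.1 - 1, v.2 - 1) ∉ D)
    (hnbDnw : ∀ v, IsNWCorner D v → (v.1 + 1, v.2 - 1) ∉ D)
    {s Y' : ℤ}
    (hm : (s, Y' - 1) ∉ D) (ho : (s, Y' + 1) ∉ D)
    (hc0 : (s, Y') ∈ D) (hw : (s + 1, Y') ∈ D)
    (hfar : (s + 2, Y') ∉ D) (hwn : (s + 1, Y' + 1) ∉ D) (hws : (s + 1, Y' - 1) ∈ D)
    (hleafA : ∀ u, IsLeaf D u → ReachA D ((s, Y'), (s + 1, Y')) u (s, Y'))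
    (habove : ∀ u ∈ D, Y' < u.2 → ReachA D ((s, Y'), (s + 1, Y')) u (s, Y')) : False := by
  have h11 : (s : ℤ) + 1 - 1 = s := by ring
  obtain ⟨S, hSsub, hpLS, hpRS, hSconn, hScconn, hclos, hInL, hInR⟩ :=
    bridge hconn hcontr (δ := 1) (s := s) (Y' := Y') (Or.inr rfl) hm ho
      (by rw [h11]; exact hc0) hw
  rw [h11] at hpLS hSconn hclos hInL hInR
  -- spawn side is the pR side, i.e. T = D \ S
  refine finish_spawn IH hfin hcard hcontr hnbDne hnbDnw (S := D \ S)
    (w1 := s + 1) (c01 := s) (Y' := Y')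
    (Or.inr (by ring)) Set.diff_subset ⟨hw, hpRS⟩ (fun hc => hc.2 hpLS) hc0
    (fun z hz => hScconn z hz.1 hz.2) ?_ ?_ ?_ hwn hws ho ?_ ?_
  · intro z hzD hzT
    have hzS : z ∈ S := by
      by_contra hzS
      exact hzT ⟨hzD, hzS⟩
    have h1 := hSconn z hzS
    refine h1.mono ?_
    intro u hu
    exact ⟨hSsub hu, fun hc => hc.2 hu⟩
  · intro u huT t htD hadj hn1 hn2
    refine ⟨htD, ?_⟩
    intro htS
    refine huT.2 (hclos t htS u (huT.1) (gridAdj_symm hadj) ?_ ?_)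
    · rintro ⟨e1, e2⟩
      exact hn1 ⟨e2, e1⟩
    · rintro ⟨e1, e2⟩
      exact hn2 ⟨e2, e1⟩
  · have hp : ((2 * (s + 1) - s : ℤ), Y') = ((s + 2 : ℤ), Y') := by
      refine Prod.ext ?_ rfl
      dsimp only
      ring
    rw [hp]
    exact hfar
  · intro u huT
    by_contra hub
    push_neg at hub
    exact huT.2 (hInL u (habove u huT.1 hub))
  · intro u hu hcT
    exact hcT.2 (hInL u (hleafA u hu))

end Spawn

lemma cellc {a b c d : ℤ} (h1 : a = c) (h2 : b = d) : ((a, b) : ℤ × ℤ) = (c, d) := by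
  rw [h1, h2]

lemma memc {D : Set (ℤ × ℤ)} {a b c d : ℤ} (h1 : c = a) (h2 : d = b) (h : (a, b) ∈ D) :
    (c, d) ∈ D := by rw [h1, h2]; exact h

lemma nmemc {D : Set (ℤ × ℤ)} {a b c d : ℤ} (h1 : c = a) (h2 : d = b) (h : (a, b) ∉ D) :
    (c, d) ∉ D := by rw [h1, h2]; exact h


lemma delete_leaf_typeT {D : Set (ℤ × ℤ)} {xv Y : ℤ}
    (hconn : ConnectedConf D) (hcontr : Contractible D)
    (hluniq : ∀ u v, IsLeaf D u → IsLeaf D v → u = v)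
    (htop : ∀ u ∈ D, u.2 ≤ Y)
    (hOther : ∀ u ∈ D, u.2 = Y → u = ((xv : ℤ), (Y : ℤ)))
    (hvD : (xv, Y) ∈ D) (hvleaf : IsLeaf D (xv, Y)) (hw0D : (xv, Y - 1) ∈ D)
    (huniq : ∀ t ∈ D, gridAdj (xv, Y) t → t = ((xv : ℤ), (Y - 1 : ℤ)))
    (hne : ∀ v, IsNECorner D v → (v.1 - 1, v.2 - 1) ∉ D)
    (hnw : ∀ v, IsNWCorner D v → (v.1 + 1, v.2 - 1) ∉ D)
    (hNEb : ¬((xv - 1, Y - 1) ∈ D ∧ (xv, Y - 2) ∈ D ∧ (xv - 1, Y - 2) ∈ D))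
    (hNWb : ¬((xv + 1, Y - 1) ∈ D ∧ (xv, Y - 2) ∈ D ∧ (xv + 1, Y - 2) ∈ D))
    (htopabove : ∀ x y : ℤ, Y < y → (x, y) ∉ D) :
    TypeT (D \ {((xv : ℤ), (Y : ℤ))}) := by
  have hw0ne : ((xv : ℤ), (Y - 1 : ℤ)) ≠ ((xv : ℤ), (Y : ℤ)) := by
    intro hc
    have h2 := congrArg Prod.snd hc
    dsimp only at h2
    omega
  have hw0A : ((xv : ℤ), (Y - 1 : ℤ)) ∈ D \ {((xv : ℤ), (Y : ℤ))} := ⟨hw0D, hw0ne⟩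
  have hnbrv : ∀ u ∈ D, gridAdj u (xv, Y) → u = ((xv : ℤ), (Y - 1 : ℤ)) :=
    fun u hu hadj => huniq u hu (gridAdj_symm hadj)
  have htransA : ∀ u : ℤ × ℤ, u ∈ D \ {((xv : ℤ), (Y : ℤ))} → u ≠ ((xv : ℤ), (Y - 1 : ℤ)) →
      ∀ t, gridAdj u t → (t ∈ D \ {((xv : ℤ), (Y : ℤ))} ↔ t ∈ D) := by
    intro u huA hune t hadj
    constructor
    · exact fun ht => ht.1
    · intro htD
      refine ⟨htD, ?_⟩
      intro hteq
      exact hune (hnbrv u huA.1 (hteq ▸ hadj))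
  have hconnA : ConnectedConf (D \ {((xv : ℤ), (Y : ℤ))}) := by
    refine ⟨⟨(xv, Y - 1), hw0A⟩, ?_⟩
    intro p hp q hq
    exact (reachIn_delete huniq hp.1 hp.2 q (hconn.2 p hp.1 q hq.1)).1 hq.2
  have hcontrA : Contractible (D \ {((xv : ℤ), (Y : ℤ))}) := by
    have hhub : ∀ x, x ∉ D \ {((xv : ℤ), (Y : ℤ))} →
        ReachIn (D \ {((xv : ℤ), (Y : ℤ))})ᶜ x (xv, Y + 1) := by
      intro x hx
      have hnv : ((xv : ℤ), (Y + 1 : ℤ)) ∉ D := htopabove xv (Y + 1) (by omega)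
      have hnvA : ((xv : ℤ), (Y + 1 : ℤ)) ∈ (D \ {((xv : ℤ), (Y : ℤ))})ᶜ := fun hc => hnv hc.1
      by_cases hxD : x ∈ D
      · have hxv : x = ((xv : ℤ), (Y : ℤ)) := by
          by_contra hc
          exact hx ⟨hxD, hc⟩
        subst hxv
        exact ReachIn.single hx hnvA (gridAdj_mk (by tauto))
      · refine (hcontr x hxD _ hnv).mono ?_
        intro z hz hc
        exact hz hc.1
    intro p hp q hq
    exact (hhub p hp).trans (hhub q hq).symm
  have hleafA1 : ∀ u, IsLeaf (D \ {((xv : ℤ), (Y : ℤ))}) u → u = ((xv : ℤ), (Y - 1 : ℤ)) := by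
    intro u hu
    by_contra hune
    have htr := htransA u hu.1 hune
    obtain ⟨huA, t0', ⟨ht0A, ht0adj⟩, huniq'⟩ := hu
    have hleafD : IsLeaf D u := by
      refine ⟨huA.1, t0', ⟨ht0A.1, ht0adj⟩, ?_⟩
      rintro t ⟨htD, htadj⟩
      exact huniq' t ⟨(htr t htadj).2 htD, htadj⟩
    have h1 := hluniq _ _ hleafD hvleaf
    exact huA.2 h1
  have hneA : ∀ z, IsNECorner (D \ {((xv : ℤ), (Y : ℤ))}) z →
      (z.1 - 1, z.2 - 1) ∉ D \ {((xv : ℤ), (Y : ℤ))} := by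
    intro z hz hdiag
    by_cases hzw : z = ((xv : ℤ), (Y - 1 : ℤ))
    · subst hzw
      obtain ⟨hz0, hzW, hzS, hzE, hzN⟩ := hz
      dsimp only at hzW hzS hdiag
      exact hNEb ⟨hzW.1, memc rfl (by ring) hzS.1, memc rfl (by ring) hdiag.1⟩
    · obtain ⟨hz0, hzW, hzS, hzE, hzN⟩ := hz
      have htr := htransA z hz0 hzw
      refine hne z ⟨hz0.1, hzW.1, hzS.1, ?_, ?_⟩ hdiag.1
      · intro hc
        exact hzE ((htr _ (gridAdj_iff.2 (Or.inl rfl))).2 hc)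
      · intro hc
        exact hzN ((htr _ (gridAdj_iff.2 (Or.inr (Or.inr (Or.inl rfl))))).2 hc)
  have hnwA : ∀ z, IsNWCorner (D \ {((xv : ℤ), (Y : ℤ))}) z →
      (z.1 + 1, z.2 - 1) ∉ D \ {((xv : ℤ), (Y : ℤ))} := by
    intro z hz hdiag
    by_cases hzw : z = ((xv : ℤ), (Y - 1 : ℤ))
    · subst hzw
      obtain ⟨hz0, hzE, hzS, hzW, hzN⟩ := hz
      dsimp only at hzE hzS hdiag
      exact hNWb ⟨hzE.1, memc rfl (by ring) hzS.1, memc rfl (by ring) hdiag.1⟩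
    · obtain ⟨hz0, hzE, hzS, hzW, hzN⟩ := hz
      have htr := htransA z hz0 hzw
      refine hnw z ⟨hz0.1, hzE.1, hzS.1, ?_, ?_⟩ hdiag.1
      · intro hc
        exact hzW ((htr _ (gridAdj_iff.2 (Or.inr (Or.inl rfl)))).2 hc)
      · intro hc
        exact hzN ((htr _ (gridAdj_iff.2 (Or.inr (Or.inr (Or.inl rfl))))).2 hc)
  refine ⟨hconnA, hcontrA, fun u u' hu hu' => by rw [hleafA1 u hu, hleafA1 u' hu'], ?_, hneA, hnwA⟩
  intro u hu x hx
  rw [hleafA1 u hu]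
  dsimp only
  have h1 := htop x hx.1
  by_cases hxY : x.2 = Y
  · exact absurd (hOther x hx.1 hxY) hx.2
  · omega

set_option maxHeartbeats 4000000 in
lemma main_step (n : ℕ)
    (IH : ∀ m, m < n → ∀ E : Set (ℤ × ℤ), E.Finite → TypeT E → E.ncard = m → E.ncard ≤ 1) :
    ∀ D : Set (ℤ × ℤ), D.Finite → TypeT D → D.ncard = n → D.ncard ≤ 1 := by
  intro D hfin hT hcard
  by_contra hbig
  push_neg at hbig
  obtain ⟨hconn, hcontr, hluniq, htopleaf, hne, hnw⟩ := hT
  obtain ⟨Y, ⟨t0, ht0D, ht0Y⟩, htop⟩ := exists_top hfin hconn.1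
  have ht0D' : (t0.1, Y) ∈ D := by
    rw [← ht0Y]
    exact ht0D
  have htopabove : ∀ x y : ℤ, Y < y → (x, y) ∉ D := by
    intro x y hy hc
    have := htop _ hc
    dsimp only at this
    omega
  have habove_gen : ∀ (e : (ℤ × ℤ) × (ℤ × ℤ)) (c : ℤ × ℤ),
      ∀ u ∈ D, Y < u.2 → ReachA D e u c := by
    intro e c u hu hY
    exact absurd (htop u hu) (by omega)
  by_cases hHasLeaf : ∃ v, IsLeaf D v
  · -- there is a (unique) leaf v; it lies in the top row
    obtain ⟨v, hvleaf⟩ := hHasLeaf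
    have hvD : v ∈ D := hvleaf.1
    have hvY : v.2 = Y := le_antisymm (htop v hvD) (by rw [← ht0Y]; exact htopleaf v hvleaf t0 ht0D)
    have hv' : v = (v.1, Y) := by
      rw [← hvY]
    set xv := v.1 with hxv
    rw [hv'] at hvleaf hvD
    obtain ⟨w0, hw0D, hw0adj, huniq⟩ := leaf_unique_nbr hvleaf
    rcases gridAdj_iff.1 hw0adj with h | h | h | h <;> dsimp only at h <;> subst h
    · -- A: east neighbour
      have hWout : (xv - 1, Y) ∉ D := by
        intro hc
        have h1 := huniq _ hc (gridAdj_mk (by tauto))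
        have h2 := congrArg Prod.fst h1
        dsimp only at h2
        omega
      obtain ⟨r, hxr, hrunR, hrp1⟩ := interval_right hfin hvD
      have hrgt : xv + 1 ≤ r := by
        by_contra hcc
        push_neg at hcc
        exact (nmemc (by omega) rfl hrp1 : ((xv + 1 : ℤ), (Y : ℤ)) ∉ D) hw0D
      have hrD : (r, Y) ∈ D := hrunR r (by omega) le_rfl
      have hr1D : (r - 1, Y) ∈ D := hrunR (r - 1) (by omega) (by omega)
      have hrnl : ¬IsLeaf D (r, Y) := by
        intro hc
        have h1 := hluniq _ _ hc hvleaf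
        have h2 := congrArg Prod.fst h1
        dsimp only at h2
        omega
      obtain ⟨t3, ht3D, ht3adj, ht3ne⟩ :=
        not_leaf_second hrD hr1D (gridAdj_mk (by right; left; constructor <;> ring)) hrnl
      have hrsouth : (r, Y - 1) ∈ D := by
        rcases gridAdj_iff.1 ht3adj with h | h | h | h <;> dsimp only at h <;> subst h
        · exact absurd ht3D hrp1
        · exact absurd rfl ht3ne
        · exact absurd ht3D (htopabove r (Y + 1) (by omega))
        · exact ht3D
      have hNEr : IsNECorner D (r, Y) := ⟨hrD, hr1D, hrsouth, hrp1, htopabove r (Y + 1) (by omega)⟩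
      have hpock : (r - 1, Y - 1) ∉ D := hne (r, Y) hNEr
      refine spawnR IH hfin hcard hconn hcontr hne hnw (s := r - 1) (Y' := Y)
        hpock (htopabove (r - 1) (Y + 1) (by omega))
        hr1D (memc (by ring) rfl hrD)
        (nmemc (by ring) rfl hrp1)
        (nmemc (by ring) rfl (htopabove r (Y + 1) (by omega)))
        (memc (by ring) rfl hrsouth)
        ?_ (habove_gen _ _)
      intro u hu
      have huv := hluniq u (xv, Y) hu hvleaf
      rw [huv]
      refine reachA_run_east ((r - 1 - xv).toNat) xv (r - 1) (by omega) (by omega) ?_ ?_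
      · intro t h1 h2
        exact hrunR t h1 (by omega)
      · intro t h1 h2
        constructor
        · rintro ⟨hc1, -⟩
          have h2' := congrArg Prod.fst hc1
          dsimp only at h2'
          omega
        · rintro ⟨hc1, -⟩
          have h2' := congrArg Prod.fst hc1
          dsimp only at h2'
          omega
    · -- B: west neighbour
      have hEout : (xv + 1, Y) ∉ D := by
        intro hc
        have h1 := huniq _ hc (gridAdj_mk (by tauto))
        have h2 := congrArg Prod.fst h1
        dsimp only at h2
        omega
      obtain ⟨l, hlx, hrunL, hlm1⟩ := interval_left hfin hvD
      have hllt : l ≤ xv - 1 := by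
        by_contra hcc
        push_neg at hcc
        exact (nmemc (by omega) rfl hlm1 : ((xv - 1 : ℤ), (Y : ℤ)) ∉ D) hw0D
      have hlD : (l, Y) ∈ D := hrunL l le_rfl (by omega)
      have hl1D : (l + 1, Y) ∈ D := hrunL (l + 1) (by omega) (by omega)
      have hlnl : ¬IsLeaf D (l, Y) := by
        intro hc
        have h1 := hluniq _ _ hc hvleaf
        have h2 := congrArg Prod.fst h1
        dsimp only at h2
        omega
      obtain ⟨t3, ht3D, ht3adj, ht3ne⟩ :=
        not_leaf_second hlD hl1D (gridAdj_mk (by tauto)) hlnl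
      have hlsouth : (l, Y - 1) ∈ D := by
        rcases gridAdj_iff.1 ht3adj with h | h | h | h <;> dsimp only at h <;> subst h
        · exact absurd rfl ht3ne
        · exact absurd ht3D hlm1
        · exact absurd ht3D (htopabove l (Y + 1) (by omega))
        · exact ht3D
      have hNWl : IsNWCorner D (l, Y) := ⟨hlD, hl1D, hlsouth, hlm1, htopabove l (Y + 1) (by omega)⟩
      have hpock : (l + 1, Y - 1) ∉ D := hnw (l, Y) hNWl
      refine spawnL IH hfin hcard hconn hcontr hne hnw (s := l + 1) (Y' := Y)
        hpock (htopabove (l + 1) (Y + 1) (by omega))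
        (memc (by ring) rfl hlD) hl1D
        (nmemc (by ring) rfl hlm1)
        (nmemc (by ring) rfl (htopabove l (Y + 1) (by omega)))
        (memc (by ring) rfl hlsouth)
        ?_ (habove_gen _ _)
      intro u hu
      have huv := hluniq u (xv, Y) hu hvleaf
      rw [huv]
      refine reachA_run_west ((xv - (l + 1)).toNat) (l + 1) xv (by omega) (by omega) ?_ ?_
      · intro t h1 h2
        exact hrunL t (by omega) h2
      · intro t h1 h2
        constructor
        · rintro ⟨hc1, -⟩
          have h2' := congrArg Prod.fst hc1
          dsimp only at h2'
          omega
        · rintro ⟨hc1, -⟩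
          have h2' := congrArg Prod.fst hc1
          dsimp only at h2'
          omega
    · exact htopabove xv (Y + 1) (by omega) hw0D -- north impossible
    · -- D: south neighbour
      have hWout : (xv - 1, Y) ∉ D := by
        intro hc
        have h1 := huniq _ hc (gridAdj_mk (by tauto))
        have h2 := congrArg Prod.snd h1
        dsimp only at h2
        omega
      have hEout : (xv + 1, Y) ∉ D := by
        intro hc
        have h1 := huniq _ hc (gridAdj_mk (by tauto))
        have h2 := congrArg Prod.snd h1
        dsimp only at h2
        omega
      by_cases hOther : ∃ u ∈ D, u.2 = Y ∧ u ≠ ((xv : ℤ), (Y : ℤ))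
      · -- D1: another top-row cell exists
        obtain ⟨u1, hu1D, hu1Y, hu1ne⟩ := hOther
        have hu1D' : (u1.1, Y) ∈ D := by rw [← hu1Y]; exact hu1D
        obtain ⟨r', hxr', hrunR', hrp1'⟩ := interval_right hfin hu1D'
        obtain ⟨l', hlx', hrunL', hlm1'⟩ := interval_left hfin hu1D'
        have hrunall' : ∀ t : ℤ, l' ≤ t → t ≤ r' → (t, Y) ∈ D := by
          intro t h1 h2
          by_cases h : t ≤ u1.1
          · exact hrunL' t h1 h
          · exact hrunR' t (by omega) h2
        have hvout : xv < l' ∨ r' < xv := by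
          by_contra hvin
          push_neg at hvin
          obtain ⟨hv1, hv2⟩ := hvin
          by_cases hx1 : l' < xv
          · exact hWout (hrunall' (xv - 1) (by omega) (by omega))
          by_cases hx2 : xv < r'
          · exact hEout (hrunall' (xv + 1) (by omega) (by omega))
          refine hu1ne ?_
          have hx : u1.1 = xv := by omega
          rw [← hx, ← hu1Y]
        have hl'D : (l', Y) ∈ D := hrunall' l' le_rfl (by omega)
        have hr'D : (r', Y) ∈ D := hrunall' r' (by omega) le_rfl
        have hl'nl : ¬IsLeaf D (l', Y) := by
          intro hc
          have h1 := hluniq _ _ hc hvleaf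
          have h2 := congrArg Prod.fst h1
          dsimp only at h2
          omega
        have hr'nl : ¬IsLeaf D (r', Y) := by
          intro hc
          have h1 := hluniq _ _ hc hvleaf
          have h2 := congrArg Prod.fst h1
          dsimp only at h2
          omega
        have hl'r' : l' < r' := by
          by_contra hcc
          push_neg at hcc
          have heq : l' = r' := by omega
          have hEout' : (l' + 1, Y) ∉ D := nmemc (by omega) rfl hrp1'
          obtain ⟨t, htD, htadj⟩ := exists_nbr hconn hl'D hvD (by
            intro hceq
            have h2 := congrArg Prod.fst hceq
            dsimp only at h2
            omega)
          have hts : t = (l', Y - 1) := by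
            rcases gridAdj_iff.1 htadj with h | h | h | h <;> dsimp only at h <;> subst h
            · exact absurd htD hEout'
            · exact absurd htD hlm1'
            · exact absurd htD (htopabove l' (Y + 1) (by omega))
            · rfl
          subst hts
          refine hl'nl ⟨hl'D, (l', Y - 1), ⟨htD, htadj⟩, ?_⟩
          rintro t' ⟨ht'D, ht'adj⟩
          rcases gridAdj_iff.1 ht'adj with h | h | h | h <;> dsimp only at h <;> subst h
          · exact absurd ht'D hEout'
          · exact absurd ht'D hlm1'
          · exact absurd ht'D (htopabove l' (Y + 1) (by omega))
          · rfl
        have hl'1D : (l' + 1, Y) ∈ D := hrunall' (l' + 1) (by omega) (by omega)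
        have hr'1D : (r' - 1, Y) ∈ D := hrunall' (r' - 1) (by omega) (by omega)
        obtain ⟨t2, ht2D, ht2adj, ht2ne⟩ :=
          not_leaf_second hl'D hl'1D (gridAdj_mk (by tauto)) hl'nl
        have hl'south : (l', Y - 1) ∈ D := by
          rcases gridAdj_iff.1 ht2adj with h | h | h | h <;> dsimp only at h <;> subst h
          · exact absurd rfl ht2ne
          · exact absurd ht2D hlm1'
          · exact absurd ht2D (htopabove l' (Y + 1) (by omega))
          · exact ht2D
        obtain ⟨t3, ht3D, ht3adj, ht3ne⟩ :=
          not_leaf_second hr'D hr'1D (gridAdj_mk (by right; left; constructor <;> ring)) hr'nl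
        have hr'south : (r', Y - 1) ∈ D := by
          rcases gridAdj_iff.1 ht3adj with h | h | h | h <;> dsimp only at h <;> subst h
          · exact absurd ht3D hrp1'
          · exact absurd rfl ht3ne
          · exact absurd ht3D (htopabove r' (Y + 1) (by omega))
          · exact ht3D
        have hNWl' : IsNWCorner D (l', Y) :=
          ⟨hl'D, hl'1D, hl'south, hlm1', htopabove l' (Y + 1) (by omega)⟩
        have hpockL : (l' + 1, Y - 1) ∉ D := hnw (l', Y) hNWl'
        have hNEr' : IsNECorner D (r', Y) :=
          ⟨hr'D, hr'1D, hr'south, hrp1', htopabove r' (Y + 1) (by omega)⟩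
        have hpockR : (r' - 1, Y - 1) ∉ D := hne (r', Y) hNEr'
        by_cases hrl1' : r' = l' + 1
        · exact hpockL (memc (by omega) rfl hr'south)
        have hl2 : l' + 2 ≤ r' := by omega
        have hb2 : ((l' : ℤ) + 1) + 0 - 1 = l' := by ring
        have hb1 : ((l' : ℤ) + 1) + 0 = l' + 1 := by ring
        obtain ⟨S, hSsub, hpLS, hpRS, hSconn, hScconn, hclos, hInL, hInR⟩ :=
          bridge hconn hcontr (δ := 0) (s := l' + 1) (Y' := Y) (Or.inl rfl)
            hpockL (htopabove (l' + 1) (Y + 1) (by omega))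
            (by rw [hb2]; exact hl'D) (by rw [hb1]; exact hl'1D)
        rw [hb2] at hpLS hSconn hclos hInL hInR
        rw [hb1] at hpRS hScconn hclos hInL hInR
        by_cases hvS : ((xv : ℤ), (Y : ℤ)) ∈ S
        · -- spawn the right side, at s := r' - 1
          have hrm1S : (r' - 1, Y) ∉ S := by
            refine hInR _ ?_
            refine reachA_run_west ((r' - 1 - (l' + 1)).toNat) (l' + 1) (r' - 1)
              (by omega) (by omega) (fun t h1 h2 => hrunall' t (by omega) (by omega)) ?_
            intro t h1 h2
            constructor
            · rintro ⟨hc1, -⟩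
              have h2' := congrArg Prod.fst hc1
              dsimp only at h2'
              omega
            · rintro ⟨hc1, -⟩
              have h2' := congrArg Prod.fst hc1
              dsimp only at h2'
              omega
          have hreachv : ReachA D ((r' - 1, Y), (r' - 1 + 1, Y)) (xv, Y) (r' - 1, Y) := by
            have p1 : ReachIn S (xv, Y) (l', Y) := (hSconn _ hvS).symm
            have p1' : ReachA D ((r' - 1, Y), (r' - 1 + 1, Y)) (xv, Y) (l', Y) :=
              ReachA.of_reachIn hSsub hrm1S p1
            have p2 : ReachA D ((r' - 1, Y), (r' - 1 + 1, Y)) (l', Y) (l' + 1, Y) := by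
              refine ReachA.single hl'D hl'1D (gridAdj_mk (by tauto)) ?_ ?_
              · rintro ⟨hc1, -⟩
                have h2' := congrArg Prod.fst hc1
                dsimp only at h2'
                omega
              · rintro ⟨hc1, -⟩
                have h2' := congrArg Prod.fst hc1
                dsimp only at h2'
                omega
            have p3 : ReachA D ((r' - 1, Y), (r' - 1 + 1, Y)) (l' + 1, Y) (r' - 1, Y) := by
              refine reachA_run_east ((r' - 1 - (l' + 1)).toNat) (l' + 1) (r' - 1)
                (by omega) (by omega) (fun t h1 h2 => hrunall' t (by omega) (by omega)) ?_
              intro t h1 h2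
              constructor
              · rintro ⟨hc1, -⟩
                have h2' := congrArg Prod.fst hc1
                dsimp only at h2'
                omega
              · rintro ⟨hc1, -⟩
                have h2' := congrArg Prod.fst hc1
                dsimp only at h2'
                omega
            exact (p1'.trans p2).trans p3
          refine spawnR IH hfin hcard hconn hcontr hne hnw (s := r' - 1) (Y' := Y)
            hpockR (htopabove (r' - 1) (Y + 1) (by omega))
            hr'1D (memc (by ring) rfl hr'D)
            (nmemc (by ring) rfl hrp1')
            (nmemc (by ring) rfl (htopabove r' (Y + 1) (by omega)))
            (memc (by ring) rfl hr'south)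
            ?_ (habove_gen _ _)
          intro u hu
          rw [hluniq u _ hu hvleaf]
          exact hreachv
        · -- v is not on the left side: spawn the left side directly
          refine finish_spawn IH hfin hcard hcontr hne hnw (S := S)
            (w1 := l') (c01 := l' + 1) (Y' := Y) (Or.inl rfl)
            hSsub hpLS hpRS hl'1D hSconn hScconn hclos
            (nmemc (by ring) rfl hlm1')
            (htopabove l' (Y + 1) (by omega)) hl'south
            (htopabove (l' + 1) (Y + 1) (by omega))
            (fun u hu => htop u (hSsub hu)) ?_
          intro u hu
          rw [hluniq u _ hu hvleaf]
          exact hvS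
      · -- D2: v is the only top-row cell
        push_neg at hOther
        have hnorthonly : ∀ x : ℤ, x ≠ xv → (x, Y) ∉ D := by
          intro x hx hc
          have h1 := hOther (x, Y) hc rfl
          have h2 := congrArg Prod.fst h1
          dsimp only at h2
          exact hx h2
        by_cases hNEb : (xv - 1, Y - 1) ∈ D ∧ (xv, Y - 2) ∈ D ∧ (xv - 1, Y - 2) ∈ D
        · -- bad NE corner would appear at (xv, Y-1) after deleting v : march west
          obtain ⟨hNE1, hNE2, hNE4⟩ := hNEb
          obtain ⟨B, hB⟩ := bddX_below hfin
          have hexK : ∃ k : ℕ, ((xv - k - 2 : ℤ), (Y - 1 : ℤ)) ∉ D := by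
            refine ⟨(xv - B).toNat, fun hc => ?_⟩
            have := hB _ hc
            dsimp only at this
            omega
          classical
          set n0 := Nat.find hexK with hn0def
          set K : ℤ := (n0 : ℤ) + 1 with hKdef
          have hK1 : 1 ≤ K := by omega
          have hKout : (xv - K - 1, Y - 1) ∉ D := by
            have h1 := Nat.find_spec hexK
            exact nmemc (by omega) rfl h1
          have hKrun : ∀ j : ℤ, 0 ≤ j → j ≤ K → (xv - j, Y - 1) ∈ D := by
            intro j h0 hK
            by_cases hj0 : j = 0
            · exact memc (by omega) rfl hw0D
            by_cases hj1 : j = 1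
            · exact memc (by omega) rfl hNE1
            have hlt : (j - 2).toNat < n0 := by omega
            have h2 := Nat.find_min hexK hlt
            simp only [not_not] at h2
            exact memc (by omega) rfl h2
          have hnorthK : ∀ j : ℤ, 1 ≤ j → (xv - j, Y) ∉ D := fun j hj =>
            hnorthonly _ (by omega)
          by_cases hsK : (xv - K, Y - 2) ∈ D
          · have hNWc : IsNWCorner D (xv - K, Y - 1) := by
              refine ⟨hKrun K (by omega) le_rfl, ?_, ?_, ?_, ?_⟩ <;> dsimp only
              · exact memc (by omega) rfl (hKrun (K - 1) (by omega) (by omega))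
              · exact memc rfl (by ring) hsK
              · exact hKout
              · exact nmemc rfl (by ring) (hnorthK K hK1)
            have hpock2 : (xv - K + 1, Y - 2) ∉ D := by
              have h1 := hnw _ hNWc
              dsimp only at h1
              exact nmemc rfl (by ring) h1
            by_cases hKone : K = 1
            · exact hpock2 (memc (by omega) rfl hNE2)
            have hK2 : 2 ≤ K := by omega
            have hwalkv : ReachA D ((xv - K + 1 - 1, Y - 1), (xv - K + 1, Y - 1))
                (xv, Y) (xv - K + 1, Y - 1) := by
              have step0 : ReachA D ((xv - K + 1 - 1, Y - 1), (xv - K + 1, Y - 1))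
                  (xv, Y) (xv, Y - 1) := by
                refine ReachA.single hvD hw0D (gridAdj_mk (by tauto)) ?_ ?_
                · rintro ⟨hc1, -⟩
                  have h2' := congrArg Prod.snd hc1
                  dsimp only at h2'
                  omega
                · rintro ⟨hc1, -⟩
                  have h2' := congrArg Prod.snd hc1
                  dsimp only at h2'
                  omega
              have hrun : ReachA D ((xv - K + 1 - 1, Y - 1), (xv - K + 1, Y - 1))
                  (xv, Y - 1) (xv - K + 1, Y - 1) := by
                refine reachA_run_west ((xv - (xv - K + 1)).toNat) (xv - K + 1) xv
                  (by omega) (by omega)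
                  (fun t h1 h2 => memc (by omega) rfl (hKrun (xv - t) (by omega) (by omega))) ?_
                intro t h1 h2
                constructor
                · rintro ⟨hc1, -⟩
                  have h2' := congrArg Prod.fst hc1
                  dsimp only at h2'
                  omega
                · rintro ⟨hc1, -⟩
                  have h2' := congrArg Prod.fst hc1
                  dsimp only at h2'
                  omega
              exact step0.trans hrun
            refine spawnL IH hfin hcard hconn hcontr hne hnw (s := xv - K + 1) (Y' := Y - 1)
              (nmemc rfl (by ring) hpock2)
              (nmemc (by omega) (by ring) (hnorthK (K - 1) (by omega)))
              (memc (by omega) rfl (hKrun K (by omega) le_rfl))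
              (memc (by omega) rfl (hKrun (K - 1) (by omega) (by omega)))
              (nmemc (by omega) rfl hKout)
              (nmemc (by omega) (by ring) (hnorthK K hK1))
              (memc (by omega) (by ring) hsK)
              ?_ ?_
            · intro u hu
              rw [hluniq u _ hu hvleaf]
              exact hwalkv
            · intro u hu h2
              have huY := htop u hu
              have hueq : u = ((xv : ℤ), (Y : ℤ)) := hOther u hu (by omega)
              rw [hueq]
              exact hwalkv
          · -- (xv - K, Y-1) would be a second leaf
            have haKleaf : IsLeaf D (xv - K, Y - 1) := by
              refine ⟨hKrun K (by omega) le_rfl, (xv - K + 1, Y - 1),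
                ⟨memc (by omega) rfl (hKrun (K - 1) (by omega) (by omega)),
                  gridAdj_mk (by tauto)⟩, ?_⟩
              rintro t' ⟨ht'D, ht'adj⟩
              rcases gridAdj_iff.1 ht'adj with h | h | h | h <;> dsimp only at h <;> subst h
              · rfl
              · exact absurd ht'D hKout
              · exact absurd ht'D (nmemc rfl (by ring) (hnorthK K hK1))
              · exact absurd ht'D (nmemc rfl (by ring) hsK)
            have h1 := hluniq _ _ haKleaf hvleaf
            have h2 := congrArg Prod.snd h1
            dsimp only at h2
            omega
        by_cases hNWb : (xv + 1, Y - 1) ∈ D ∧ (xv, Y - 2) ∈ D ∧ (xv + 1, Y - 2) ∈ D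
        · -- march east
          obtain ⟨hNW1, hNW2, hNW4⟩ := hNWb
          obtain ⟨B, hB⟩ := bddX_above hfin
          have hexK : ∃ k : ℕ, ((xv + k + 2 : ℤ), (Y - 1 : ℤ)) ∉ D := by
            refine ⟨(B - xv).toNat, fun hc => ?_⟩
            have := hB _ hc
            dsimp only at this
            omega
          classical
          set n0 := Nat.find hexK with hn0def
          set K : ℤ := (n0 : ℤ) + 1 with hKdef
          have hK1 : 1 ≤ K := by omega
          have hKout : (xv + K + 1, Y - 1) ∉ D := by
            have h1 := Nat.find_spec hexK
            exact nmemc (by omega) rfl h1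
          have hKrun : ∀ j : ℤ, 0 ≤ j → j ≤ K → (xv + j, Y - 1) ∈ D := by
            intro j h0 hK
            by_cases hj0 : j = 0
            · exact memc (by omega) rfl hw0D
            by_cases hj1 : j = 1
            · exact memc (by omega) rfl hNW1
            have hlt : (j - 2).toNat < n0 := by omega
            have h2 := Nat.find_min hexK hlt
            simp only [not_not] at h2
            exact memc (by omega) rfl h2
          have hnorthK : ∀ j : ℤ, 1 ≤ j → (xv + j, Y) ∉ D := fun j hj =>
            hnorthonly _ (by omega)
          by_cases hsK : (xv + K, Y - 2) ∈ D
          · have hNEc : IsNECorner D (xv + K, Y - 1) := by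
              refine ⟨hKrun K (by omega) le_rfl, ?_, ?_, ?_, ?_⟩ <;> dsimp only
              · exact memc (by omega) rfl (hKrun (K - 1) (by omega) (by omega))
              · exact memc rfl (by ring) hsK
              · exact hKout
              · exact nmemc rfl (by ring) (hnorthK K hK1)
            have hpock2 : (xv + K - 1, Y - 2) ∉ D := by
              have h1 := hne _ hNEc
              dsimp only at h1
              exact nmemc rfl (by ring) h1
            by_cases hKone : K = 1
            · exact hpock2 (memc (by omega) rfl hNW2)
            have hK2 : 2 ≤ K := by omega
            have hwalkv : ReachA D ((xv + K - 1, Y - 1), (xv + K - 1 + 1, Y - 1))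
                (xv, Y) (xv + K - 1, Y - 1) := by
              have step0 : ReachA D ((xv + K - 1, Y - 1), (xv + K - 1 + 1, Y - 1))
                  (xv, Y) (xv, Y - 1) := by
                refine ReachA.single hvD hw0D (gridAdj_mk (by tauto)) ?_ ?_
                · rintro ⟨hc1, -⟩
                  have h2' := congrArg Prod.snd hc1
                  dsimp only at h2'
                  omega
                · rintro ⟨hc1, -⟩
                  have h2' := congrArg Prod.snd hc1
                  dsimp only at h2'
                  omega
              have hrun : ReachA D ((xv + K - 1, Y - 1), (xv + K - 1 + 1, Y - 1))
                  (xv, Y - 1) (xv + K - 1, Y - 1) := by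
                refine reachA_run_east ((xv + K - 1 - xv).toNat) xv (xv + K - 1)
                  (by omega) (by omega)
                  (fun t h1 h2 => memc (by omega) rfl (hKrun (t - xv) (by omega) (by omega))) ?_
                intro t h1 h2
                constructor
                · rintro ⟨hc1, -⟩
                  have h2' := congrArg Prod.fst hc1
                  dsimp only at h2'
                  omega
                · rintro ⟨hc1, -⟩
                  have h2' := congrArg Prod.fst hc1
                  dsimp only at h2'
                  omega
              exact step0.trans hrun
            refine spawnR IH hfin hcard hconn hcontr hne hnw (s := xv + K - 1) (Y' := Y - 1)
              (nmemc rfl (by ring) hpock2)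
              (nmemc (by omega) (by ring) (hnorthK (K - 1) (by omega)))
              (memc (by omega) rfl (hKrun (K - 1) (by omega) (by omega)))
              (memc (by omega) rfl (hKrun K (by omega) le_rfl))
              (nmemc (by omega) rfl hKout)
              (nmemc (by omega) (by ring) (hnorthK K hK1))
              (memc (by omega) (by ring) hsK)
              ?_ ?_
            · intro u hu
              rw [hluniq u _ hu hvleaf]
              exact hwalkv
            · intro u hu h2
              have huY := htop u hu
              have hueq : u = ((xv : ℤ), (Y : ℤ)) := hOther u hu (by omega)
              rw [hueq]
              exact hwalkv
          · have haKleaf : IsLeaf D (xv + K, Y - 1) := by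
              refine ⟨hKrun K (by omega) le_rfl, (xv + K - 1, Y - 1),
                ⟨memc (by omega) rfl (hKrun (K - 1) (by omega) (by omega)),
                  gridAdj_mk (by right; left; constructor <;> ring)⟩, ?_⟩
              rintro t' ⟨ht'D, ht'adj⟩
              rcases gridAdj_iff.1 ht'adj with h | h | h | h <;> dsimp only at h <;> subst h
              · exact absurd ht'D hKout
              · rfl
              · exact absurd ht'D (nmemc rfl (by ring) (hnorthK K hK1))
              · exact absurd ht'D (nmemc rfl (by ring) hsK)
            have h1 := hluniq _ _ haKleaf hvleaf
            have h2 := congrArg Prod.snd h1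
            dsimp only at h2
            omega
        · -- neither bad pattern: recurse on D minus the leaf
          have hTA := delete_leaf_typeT hconn hcontr hluniq htop hOther hvD hvleaf hw0D huniq
            hne hnw hNEb hNWb htopabove
          have hw0ne : ((xv : ℤ), (Y - 1 : ℤ)) ≠ ((xv : ℤ), (Y : ℤ)) := by
            intro hc
            have h2 := congrArg Prod.snd hc
            dsimp only at h2
            omega
          have hw0A : ((xv : ℤ), (Y - 1 : ℤ)) ∈ D \ {((xv : ℤ), (Y : ℤ))} := ⟨hw0D, hw0ne⟩
          have hfinA : (D \ {((xv : ℤ), (Y : ℤ))}).Finite := hfin.subset Set.diff_subset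
          have hcardA : (D \ {((xv : ℤ), (Y : ℤ))}).ncard = D.ncard - 1 :=
            Set.ncard_diff_singleton_of_mem hvD
          have hpos : 0 < (D \ {((xv : ℤ), (Y : ℤ))}).ncard := (Set.ncard_pos hfinA).2 ⟨_, hw0A⟩
          have hle := IH _ (by omega) _ hfinA hTA rfl
          have hone : (D \ {((xv : ℤ), (Y : ℤ))}).ncard = 1 := by omega
          obtain ⟨z, hzA⟩ := Set.ncard_eq_one.1 hone
          have hwz : ((xv : ℤ), (Y - 1 : ℤ)) = z := by
            have h1 := hw0A
            rw [hzA] at h1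
            exact h1
          have hwleaf : IsLeaf D (xv, Y - 1) := by
            refine ⟨hw0D, (xv, Y), ⟨hvD, gridAdj_mk (by right; right; left; constructor <;> ring)⟩, ?_⟩
            rintro t ⟨htD, htadj⟩
            by_cases htv : t = ((xv : ℤ), (Y : ℤ))
            · exact htv
            · have htA : t ∈ D \ {((xv : ℤ), (Y : ℤ))} := ⟨htD, htv⟩
              rw [hzA, ← hwz] at htA
              have hteq : t = ((xv : ℤ), (Y - 1 : ℤ)) := htA
              rw [hteq] at htadj
              exact absurd rfl (gridAdj_ne htadj)
          have h1 := hluniq _ _ hwleaf hvleaf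
          have h2 := congrArg Prod.snd h1
          dsimp only at h2
          omega
  · -- no leaf at all
    push_neg at hHasLeaf
    obtain ⟨r, hxr, hrunR, hrp1⟩ := interval_right hfin ht0D'
    obtain ⟨l, hlx, hrunL, hlm1⟩ := interval_left hfin ht0D'
    have hrunall : ∀ t : ℤ, l ≤ t → t ≤ r → (t, Y) ∈ D := by
      intro t h1 h2
      by_cases h : t ≤ t0.1
      · exact hrunL t h1 h
      · exact hrunR t (by omega) h2
    have hlr : l < r := by
      by_contra hc
      push_neg at hc
      have hl_eq : l = t0.1 := by omega
      have hr_eq : r = t0.1 := by omega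
      obtain ⟨u1, hu1D, hu1ne⟩ := Set.exists_ne_of_one_lt_ncard hbig (l, Y)
      obtain ⟨t, htD, htadj⟩ := exists_nbr hconn (hrunall l (by omega) (by omega)) hu1D hu1ne
      have hEout : (l + 1, Y) ∉ D := nmemc (by omega) rfl hrp1
      have hWout : (l - 1, Y) ∉ D := nmemc (by omega) rfl hlm1
      have hts : t = (l, Y - 1) := by
        rcases gridAdj_iff.1 htadj with h | h | h | h <;> dsimp only at h <;> subst h
        · exact absurd htD hEout
        · exact absurd htD hWout
        · exact absurd htD (htopabove l (Y + 1) (by omega))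
        · rfl
      subst hts
      refine hHasLeaf (l, Y) ⟨hrunall l (by omega) (by omega), (l, Y - 1), ⟨htD, htadj⟩, ?_⟩
      rintro t' ⟨ht'D, ht'adj⟩
      rcases gridAdj_iff.1 ht'adj with h | h | h | h <;> dsimp only at h <;> subst h
      · exact absurd ht'D hEout
      · exact absurd ht'D hWout
      · exact absurd ht'D (htopabove l (Y + 1) (by omega))
      · rfl
    -- left end is a NW corner
    have hlD : (l, Y) ∈ D := hrunall l le_rfl (by omega)
    have hl1D : (l + 1, Y) ∈ D := hrunall (l + 1) (by omega) (by omega)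
    obtain ⟨t2, ht2D, ht2adj, ht2ne⟩ :=
      not_leaf_second hlD hl1D (gridAdj_mk (by tauto)) (hHasLeaf (l, Y))
    have hlsouth : (l, Y - 1) ∈ D := by
      rcases gridAdj_iff.1 ht2adj with h | h | h | h <;> dsimp only at h <;> subst h
      · exact absurd rfl ht2ne
      · exact absurd ht2D hlm1
      · exact absurd ht2D (htopabove l (Y + 1) (by omega))
      · exact ht2D
    have hNWl : IsNWCorner D (l, Y) := ⟨hlD, hl1D, hlsouth, hlm1, htopabove l (Y + 1) (by omega)⟩
    have hpock : (l + 1, Y - 1) ∉ D := hnw (l, Y) hNWl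
    -- right end gives a NE corner, excluding r = l + 1
    have hrD : (r, Y) ∈ D := hrunall r (by omega) le_rfl
    have hr1D : (r - 1, Y) ∈ D := hrunall (r - 1) (by omega) (by omega)
    obtain ⟨t3, ht3D, ht3adj, ht3ne⟩ :=
      not_leaf_second hrD hr1D (gridAdj_mk (by right; left; constructor <;> ring)) (hHasLeaf (r, Y))
    have hrsouth : (r, Y - 1) ∈ D := by
      rcases gridAdj_iff.1 ht3adj with h | h | h | h <;> dsimp only at h <;> subst h
      · exact absurd ht3D hrp1
      · exact absurd rfl ht3ne
      · exact absurd ht3D (htopabove r (Y + 1) (by omega))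
      · exact ht3D
    by_cases hrl1 : r = l + 1
    · exact hpock (memc (by omega) rfl hrsouth)
    · refine spawnL IH hfin hcard hconn hcontr hne hnw (s := l + 1) (Y' := Y)
        hpock (htopabove (l + 1) (Y + 1) (by omega))
        (memc (by ring) rfl hlD) hl1D
        (nmemc (by ring) rfl hlm1)
        (nmemc (by ring) rfl (htopabove l (Y + 1) (by omega)))
        (memc (by ring) rfl hlsouth)
        (fun u hu => absurd hu (hHasLeaf u))
        (habove_gen _ _)

lemma main_all : ∀ D : Set (ℤ × ℤ), D.Finite → TypeT D → D.ncard ≤ 1 := by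
  suffices h : ∀ n, ∀ D : Set (ℤ × ℤ), D.Finite → TypeT D → D.ncard = n → D.ncard ≤ 1 by
    intro D hfin hT
    exact h _ D hfin hT rfl
  intro n
  induction n using Nat.strong_induction_on with
  | _ n IH => exact main_step n IH

theorem single_cell_of_no_leaf_no_corner (C : Set (ℤ × ℤ)) (hfin : C.Finite)
    (hconn : ConnectedConf C) (hcontr : Contractible C)
    (hleaf : ∀ v, ¬ IsLeaf C v)
    (hne : ∀ v, IsNECorner C v → (v.1 - 1, v.2 - 1) ∉ C)
    (hnw : ∀ v, IsNWCorner C v → (v.1 + 1, v.2 - 1) ∉ C) :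
    ∃ v, C = {v} := by
  have hT : TypeT C :=
    ⟨hconn, hcontr, fun u v hu _ => absurd hu (hleaf u), fun u hu => absurd hu (hleaf u), hne, hnw⟩
  have h1 := main_all C hfin hT
  have h2 : 0 < C.ncard := (Set.ncard_pos hfin).2 hconn.1
  have h3 : C.ncard = 1 := by omega
  exact Set.ncard_eq_one.1 h3
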